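/- arXiv:1007.2916 — 9 statements merged into one kernel-verified Lean document; each statement's English description precedes it below -/
import Mathlib

section
/- Let X be a separable Banach space, E_1 ⊂ E_2 ⊂ ... an increasing sequence of finite-dimensional subspaces with dense union, and (ε_n) a sequence of positive reals decreasing monotonically to zero. If (e_n) is a canonical ℓ1-type sequence in B_X, then there is a subsequence (f_n) of (e_n) such that for every n, every x ∈ E_n, and every finite linear combination y = Σ_{k=n+1}^{M} λ_k f_k, one has ‖x + y‖ ≥ (1 − ε_n)‖x‖ + Σ_{k=n+1}^{M} (1 − ε_{k−1}) |λ_k|. -/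
open Filter

theorem eps_refine (ε : ℕ → ℝ) (hεpos : ∀ n, 0 < ε n) (hεanti : Antitone ε) :
    ∃ ε' : ℕ → ℝ, (∀ n, 0 < ε' n) ∧ (∀ n, ε' n < 1) ∧ (∀ n, ε' n ≤ ε n) ∧
      (∀ n, ε' (n+1) < ε' n) := by
  refine ⟨fun n => min (ε n) 2⁻¹ * (2⁻¹ + (2⁻¹:ℝ)^(n+3)), ?_, ?_, ?_, ?_⟩
  · intro n
    exact mul_pos (lt_min (hεpos n) (by norm_num)) (by positivity)
  · intro n
    have h1 : min (ε n) 2⁻¹ ≤ (2⁻¹:ℝ) := min_le_right _ _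
    have h2 : (0:ℝ) < min (ε n) 2⁻¹ := lt_min (hεpos n) (by norm_num)
    have h3 : ((2:ℝ)⁻¹)^(n+3) ≤ (2⁻¹:ℝ)^1 :=
      pow_le_pow_of_le_one (by norm_num) (by norm_num) (by omega)
    have h4 : (0:ℝ) < (2⁻¹:ℝ) + (2⁻¹)^(n+3) := by positivity
    nlinarith
  · intro n
    have h1 : min (ε n) 2⁻¹ ≤ ε n := min_le_left _ _
    have h2 : (0:ℝ) ≤ min (ε n) 2⁻¹ := le_of_lt (lt_min (hεpos n) (by norm_num))
    have h3 : ((2:ℝ)⁻¹)^(n+3) ≤ (2⁻¹:ℝ)^1 :=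
      pow_le_pow_of_le_one (by norm_num) (by norm_num) (by omega)
    nlinarith
  · intro n
    have hm : min (ε (n+1)) 2⁻¹ ≤ min (ε n) (2⁻¹:ℝ) :=
      min_le_min (hεanti (Nat.le_succ n)) le_rfl
    have hm0 : (0:ℝ) < min (ε n) 2⁻¹ := lt_min (hεpos n) (by norm_num)
    have hf1 : (0:ℝ) < (2⁻¹:ℝ) + (2⁻¹)^(n+1+3) := by positivity
    have hf : (2⁻¹:ℝ) + (2⁻¹)^(n+1+3) < (2⁻¹:ℝ) + (2⁻¹)^(n+3) := by
      have : ((2:ℝ)⁻¹)^(n+1+3) = (2⁻¹:ℝ)^(n+3) * 2⁻¹ := by ring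
      have hp : (0:ℝ) < (2⁻¹:ℝ)^(n+3) := by positivity
      nlinarith
    calc min (ε (n+1)) 2⁻¹ * ((2⁻¹:ℝ) + (2⁻¹)^(n+1+3))
        ≤ min (ε n) 2⁻¹ * ((2⁻¹:ℝ) + (2⁻¹)^(n+1+3)) :=
          mul_le_mul_of_nonneg_right hm (le_of_lt hf1)
      _ < min (ε n) 2⁻¹ * ((2⁻¹:ℝ) + (2⁻¹)^(n+3)) :=
          mul_lt_mul_of_pos_left hf hm0

theorem key_lemma {X : Type*} [NormedAddCommGroup X] [NormedSpace ℝ X]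
    (e : ℕ → X) (he : ∀ n, ‖e n‖ ≤ 1)
    (hlim : ∀ x : X, Filter.Tendsto (fun n => ‖x + e n‖) Filter.atTop (nhds (‖x‖ + 1)))
    (F : Submodule ℝ X) (hF : FiniteDimensional ℝ F)
    (θ : ℝ) (hθ : θ < 1) (N0 : ℕ) :
    ∃ j, N0 < j ∧ ∀ z ∈ F, ∀ c : ℝ, θ * (‖z‖ + |c|) ≤ ‖z + c • e j‖ := by
  rcases le_or_gt θ 0 with hθ0 | hθ0
  · refine ⟨N0 + 1, Nat.lt_succ_self _, fun z hz c => ?_⟩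
    have : θ * (‖z‖ + |c|) ≤ 0 :=
      mul_nonpos_of_nonpos_of_nonneg hθ0 (by positivity)
    exact this.trans (norm_nonneg _)
  -- positive case
  have hδ : (0:ℝ) < (1 - θ) / 3 := by linarith
  set δ := (1 - θ) / 3 with hδdef
  set R := (1 + θ) / (1 - θ) with hRdef
  have hRpos : 0 < R := div_pos (by linarith) (by linarith)
  haveI := hF
  -- A1 : eventually, for all w in ball of radius R in F, ‖w + e j‖ ≥ ‖w‖ + 1 - 3δ
  have A1 : ∀ᶠ j in atTop, ∀ w : F, ‖w‖ ≤ R → ‖(w:X)‖ + 1 - 3 * δ ≤ ‖(w:X) + e j‖ := by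
    have hcomp : IsCompact (Metric.closedBall (0:F) R) := isCompact_closedBall _ _
    have hcover : Metric.closedBall (0:F) R ⊆ ⋃ w0 : F, Metric.ball w0 δ := by
      intro w _; exact Set.mem_iUnion.2 ⟨w, Metric.mem_ball_self hδ⟩
    obtain ⟨t, ht⟩ := hcomp.elim_finite_subcover (fun w0 : F => Metric.ball w0 δ)
      (fun _ => Metric.isOpen_ball) hcover
    have hev : ∀ᶠ j in atTop, ∀ w0 ∈ t, ‖(w0:X)‖ + 1 - δ ≤ ‖(w0:X) + e j‖ := by
      rw [Filter.eventually_all_finset]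
      intro w0 _
      exact (hlim (w0:X)).eventually (eventually_ge_nhds (by linarith))
    filter_upwards [hev] with j hj w hw
    have hwmem : w ∈ Metric.closedBall (0:F) R := by
      simpa [Metric.mem_closedBall, dist_eq_norm] using hw
    obtain ⟨w0, hw0t, hww0⟩ := Set.mem_iUnion₂.1 (ht hwmem)
    have hdist : ‖(w:X) - (w0:X)‖ < δ := by
      have := Metric.mem_ball.1 hww0
      rw [dist_eq_norm] at this
      simpa using this
    have h1 := hj w0 hw0t
    have h2 : ‖(w0:X) + e j‖ - ‖(w:X) - (w0:X)‖ ≤ ‖(w:X) + e j‖ := by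
      have := norm_sub_norm_le ((w0:X) + e j) ((w0:X) - (w:X))
      have heq : (w0:X) + e j - ((w0:X) - (w:X)) = (w:X) + e j := by abel
      rw [heq] at this
      rw [norm_sub_rev] at this
      linarith
    have h3 : ‖(w:X)‖ - δ ≤ ‖(w0:X)‖ := by
      have := norm_sub_norm_le (w:X) (w0:X)
      linarith
    linarith
  have A2 : ∀ᶠ j in atTop, N0 < j := eventually_gt_atTop N0
  obtain ⟨j, hj1, hj2⟩ := (A1.and A2).exists
  refine ⟨j, hj2, fun z hz c => ?_⟩
  rcases eq_or_ne c 0 with rfl | hc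
  · simp only [abs_zero, add_zero, zero_smul]
    nlinarith [norm_nonneg z]
  -- c ≠ 0
  have hcabs : 0 < |c| := abs_pos.2 hc
  set w : F := ⟨c⁻¹ • z, F.smul_mem _ hz⟩ with hwdef
  have hzeq : z + c • e j = c • ((c⁻¹ • z) + e j) := by
    rw [smul_add, smul_smul, mul_inv_cancel₀ hc, one_smul]
  have hnorm : ‖z + c • e j‖ = |c| * ‖c⁻¹ • z + e j‖ := by
    rw [hzeq, norm_smul, Real.norm_eq_abs]
  have hwz : |c| * ‖c⁻¹ • z‖ = ‖z‖ := by
    rw [norm_smul, norm_inv, Real.norm_eq_abs, ← mul_assoc,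
      mul_inv_cancel₀ (ne_of_gt hcabs), one_mul]
  rcases le_or_gt ‖(w:X)‖ R with hwR | hwR
  · have := hj1 w hwR
    have h3δ : 1 - 3 * δ = θ := by rw [hδdef]; ring
    have hwc : (w:X) = c⁻¹ • z := rfl
    rw [hwc] at this
    have key : ‖c⁻¹ • z‖ + θ ≤ ‖c⁻¹ • z + e j‖ := by rw [← h3δ]; linarith
    have : |c| * (‖c⁻¹ • z‖ + θ) ≤ |c| * ‖c⁻¹ • z + e j‖ :=
      mul_le_mul_of_nonneg_left key (le_of_lt hcabs)
    rw [← hnorm] at this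
    rw [mul_add] at this
    rw [hwz] at this
    nlinarith [norm_nonneg z]
  · have hwc : (w:X) = c⁻¹ • z := rfl
    have hwR' : R < ‖c⁻¹ • z‖ := by rwa [hwc] at hwR
    have hlow : ‖c⁻¹ • z‖ - 1 ≤ ‖c⁻¹ • z + e j‖ := by
      have h0 := norm_sub_norm_le (c⁻¹ • z) (-(e j))
      rw [norm_neg] at h0
      have heq : c⁻¹ • z - -(e j) = c⁻¹ • z + e j := by abel
      rw [heq] at h0
      linarith [he j]
    have hkey : θ * (‖c⁻¹ • z‖ + 1) ≤ ‖c⁻¹ • z‖ - 1 := by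
      have hR1 : R * (1 - θ) = 1 + θ := by
        rw [hRdef, div_mul_eq_mul_div, mul_div_assoc, div_self (by linarith : (1:ℝ) - θ ≠ 0), mul_one]
      nlinarith
    have : |c| * (θ * (‖c⁻¹ • z‖ + 1)) ≤ |c| * ‖c⁻¹ • z + e j‖ :=
      mul_le_mul_of_nonneg_left (hkey.trans hlow) (le_of_lt hcabs)
    rw [← hnorm] at this
    calc θ * (‖z‖ + |c|) = |c| * (θ * (‖c⁻¹ • z‖ + 1)) := by
          rw [← hwz]; ring
      _ ≤ ‖z + c • e j‖ := this

noncomputable def chainAux {X : Type*} [NormedAddCommGroup X] [NormedSpace ℝ X]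
    (e : ℕ → X) (he : ∀ n, ‖e n‖ ≤ 1)
    (hlim : ∀ x : X, Filter.Tendsto (fun n => ‖x + e n‖) Filter.atTop (nhds (‖x‖ + 1)))
    (E : ℕ → Subspace ℝ X) (hfd : ∀ n, FiniteDimensional ℝ (E n))
    (θ : ℕ → ℝ) (hθ : ∀ k, θ k < 1) :
    ℕ → ℕ × {F : Submodule ℝ X // FiniteDimensional ℝ F}
  | 0 => ⟨0, ⟨E 0 ⊔ Submodule.span ℝ {e 0}, by haveI := hfd 0; infer_instance⟩⟩
  | (k+1) =>
    let s := chainAux e he hlim E hfd θ hθ k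
    let j := (key_lemma e he hlim s.2.1 s.2.2 (θ (k+1)) (hθ (k+1)) s.1).choose
    ⟨j, ⟨E (k+1) ⊔ s.2.1 ⊔ Submodule.span ℝ {e j},
      by haveI := s.2.2; haveI := hfd (k+1); infer_instance⟩⟩

theorem chainAux_spec {X : Type*} [NormedAddCommGroup X] [NormedSpace ℝ X]
    (e : ℕ → X) (he : ∀ n, ‖e n‖ ≤ 1)
    (hlim : ∀ x : X, Filter.Tendsto (fun n => ‖x + e n‖) Filter.atTop (nhds (‖x‖ + 1)))
    (E : ℕ → Subspace ℝ X) (hfd : ∀ n, FiniteDimensional ℝ (E n))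
    (θ : ℕ → ℝ) (hθ : ∀ k, θ k < 1) (k : ℕ) :
    (chainAux e he hlim E hfd θ hθ k).1 < (chainAux e he hlim E hfd θ hθ (k+1)).1 ∧
    ∀ z ∈ (chainAux e he hlim E hfd θ hθ k).2.1, ∀ c : ℝ,
      θ (k+1) * (‖z‖ + |c|) ≤ ‖z + c • e ((chainAux e he hlim E hfd θ hθ (k+1)).1)‖ :=
  (key_lemma e he hlim (chainAux e he hlim E hfd θ hθ k).2.1
    (chainAux e he hlim E hfd θ hθ k).2.2 (θ (k+1)) (hθ (k+1))
    (chainAux e he hlim E hfd θ hθ k).1).choose_spec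

theorem chainAux_props {X : Type*} [NormedAddCommGroup X] [NormedSpace ℝ X]
    (e : ℕ → X) (he : ∀ n, ‖e n‖ ≤ 1)
    (hlim : ∀ x : X, Filter.Tendsto (fun n => ‖x + e n‖) Filter.atTop (nhds (‖x‖ + 1)))
    (E : ℕ → Subspace ℝ X) (hfd : ∀ n, FiniteDimensional ℝ (E n))
    (θ : ℕ → ℝ) (hθ : ∀ k, θ k < 1) (k : ℕ) :
    E k ≤ (chainAux e he hlim E hfd θ hθ k).2.1 ∧
    e ((chainAux e he hlim E hfd θ hθ k).1) ∈ (chainAux e he hlim E hfd θ hθ k).2.1 ∧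
    (chainAux e he hlim E hfd θ hθ k).2.1 ≤ (chainAux e he hlim E hfd θ hθ (k+1)).2.1 := by
  refine ⟨?_, ?_, ?_⟩
  · cases k with
    | zero => exact le_sup_left
    | succ k => exact le_trans le_sup_left le_sup_left
  · cases k with
    | zero =>
      exact Submodule.mem_sup_right (Submodule.mem_span_singleton_self _)
    | succ k =>
      exact Submodule.mem_sup_right (Submodule.mem_span_singleton_self _)
  · exact le_trans le_sup_right le_sup_left

noncomputable def thetaOf (ε' : ℕ → ℝ) : ℕ → ℝ
  | 0 => 0
  | (j+1) => (1 - ε' j) / (1 - ε' (j+1))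

theorem thetaOf_succ (ε' : ℕ → ℝ) (j : ℕ) :
    thetaOf ε' (j+1) = (1 - ε' j) / (1 - ε' (j+1)) := rfl

theorem stmt_1 {X : Type*} [NormedAddCommGroup X] [NormedSpace ℝ X]
    [CompleteSpace X] [TopologicalSpace.SeparableSpace X]
    (E : ℕ → Subspace ℝ X) (hmono : Monotone E)
    (hfd : ∀ n, FiniteDimensional ℝ (E n))
    (hdense : Dense (⋃ n, (E n : Set X)))
    (ε : ℕ → ℝ) (hεpos : ∀ n, 0 < ε n) (hεanti : Antitone ε)
    (hεlim : Filter.Tendsto ε Filter.atTop (nhds 0))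
    (e : ℕ → X) (he : ∀ n, ‖e n‖ ≤ 1)
    (hlim : ∀ x : X, Filter.Tendsto (fun n => ‖x + e n‖) Filter.atTop (nhds (‖x‖ + 1))) :
    ∃ φ : ℕ → ℕ, StrictMono φ ∧
      ∀ n M : ℕ, ∀ x ∈ E n, ∀ l : ℕ → ℝ,
        ‖x + ∑ k ∈ Finset.Icc (n + 1) M, l k • e (φ k)‖ ≥
          (1 - ε n) * ‖x‖ + ∑ k ∈ Finset.Icc (n + 1) M, (1 - ε (k - 1)) * |l k| := by
  classical
  obtain ⟨ε', hε'pos, hε'lt1, hε'le, hε'succ⟩ := eps_refine ε hεpos hεanti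
  have hε'anti : Antitone ε' := (strictAnti_nat_of_succ_lt hε'succ).antitone
  have hθlt : ∀ k : ℕ, thetaOf ε' k < 1 := by
    intro k
    cases k with
    | zero => norm_num [thetaOf]
    | succ j =>
      rw [thetaOf_succ]
      have h1 : 0 < 1 - ε' (j+1) := by linarith [hε'lt1 (j+1)]
      have h2 : 1 - ε' j < 1 - ε' (j+1) := by linarith [hε'succ j]
      exact (div_lt_one h1).2 h2
  set ch := chainAux e he hlim E hfd (thetaOf ε') hθlt with hchdef
  set φ : ℕ → ℕ := fun k => (ch k).1 with hφdef
  set F : ℕ → Submodule ℝ X := fun k => (ch k).2.1 with hFdef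
  have hφmono : StrictMono φ :=
    strictMono_nat_of_lt_succ fun k => (chainAux_spec e he hlim E hfd (thetaOf ε') hθlt k).1
  have hspec : ∀ k : ℕ, ∀ z ∈ F k, ∀ c : ℝ,
      (1 - ε' k) / (1 - ε' (k+1)) * (‖z‖ + |c|) ≤ ‖z + c • e (φ (k+1))‖ := by
    intro k z hz c
    have := (chainAux_spec e he hlim E hfd (thetaOf ε') hθlt k).2 z hz c
    rwa [thetaOf_succ] at this
  have hEF : ∀ k, E k ≤ F k :=
    fun k => (chainAux_props e he hlim E hfd (thetaOf ε') hθlt k).1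
  have hmemF : ∀ k, e (φ k) ∈ F k :=
    fun k => (chainAux_props e he hlim E hfd (thetaOf ε') hθlt k).2.1
  have hFmono : Monotone F :=
    monotone_nat_of_le_succ fun k => (chainAux_props e he hlim E hfd (thetaOf ε') hθlt k).2.2
  have core : ∀ M n : ℕ, n ≤ M → ∀ x ∈ E n, ∀ l : ℕ → ℝ,
      ((1 - ε' n) * ‖x‖ + ∑ k ∈ Finset.Icc (n+1) M, (1 - ε' (k-1)) * |l k|)
        / (1 - ε' M)
      ≤ ‖x + ∑ k ∈ Finset.Icc (n+1) M, l k • e (φ k)‖ := by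
    intro M
    induction M with
    | zero =>
      intro n hn x hx l
      have hn0 : n = 0 := Nat.le_zero.1 hn
      subst hn0
      rw [Finset.Icc_eq_empty (by omega : ¬ 0+1 ≤ 0)]
      simp only [Finset.sum_empty, add_zero]
      have h2 : 0 < 1 - ε' 0 := by linarith [hε'lt1 0]
      rw [div_le_iff₀ h2, mul_comm]
    | succ M ih =>
      intro n hn x hx l
      rcases Nat.lt_or_ge n (M+1) with hnM' | hnM'
      · have hnM : n + 1 ≤ M + 1 := hnM'
        rw [Finset.sum_Icc_succ_top hnM, Finset.sum_Icc_succ_top hnM]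
        have hzmem : x + ∑ k ∈ Finset.Icc (n+1) M, l k • e (φ k) ∈ F M := by
          apply Submodule.add_mem
          · exact hEF M (hmono (by omega) hx)
          · apply Submodule.sum_mem
            intro k hk
            exact Submodule.smul_mem _ _ (hFmono (Finset.mem_Icc.1 hk).2 (hmemF k))
        have hsp := hspec M _ hzmem (l (M+1))
        have hih := ih n (by omega) x hx l
        have hM : 0 < 1 - ε' M := by linarith [hε'lt1 M]
        have hM1 : 0 < 1 - ε' (M+1) := by linarith [hε'lt1 (M+1)]
        set z := x + ∑ k ∈ Finset.Icc (n+1) M, l k • e (φ k) with hz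
        set B := (1 - ε' n) * ‖x‖ + ∑ k ∈ Finset.Icc (n+1) M, (1 - ε' (k-1)) * |l k|
          with hB
        have hassoc : x + (∑ k ∈ Finset.Icc (n+1) M, l k • e (φ k)
            + l (M+1) • e (φ (M+1))) = z + l (M+1) • e (φ (M+1)) := by
          rw [hz, add_assoc]
        rw [hassoc]
        have hih' : B ≤ (1 - ε' M) * ‖z‖ := by
          rw [div_le_iff₀ hM] at hih
          linarith
        have hsp' : (1 - ε' M) * (‖z‖ + |l (M+1)|) ≤
            ‖z + l (M+1) • e (φ (M+1))‖ * (1 - ε' (M+1)) := by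
          rw [div_mul_eq_mul_div, div_le_iff₀ hM1] at hsp
          linarith
        have hred : (M+1) - 1 = M := by omega
        rw [hred, div_le_iff₀ hM1]
        nlinarith [abs_nonneg (l (M+1))]
      · have hn1 : n = M + 1 := by omega
        subst hn1
        rw [Finset.Icc_eq_empty (by omega : ¬ (M+1)+1 ≤ M+1)]
        simp only [Finset.sum_empty, add_zero]
        have h2 : 0 < 1 - ε' (M+1) := by linarith [hε'lt1 (M+1)]
        rw [div_le_iff₀ h2, mul_comm]
  refine ⟨φ, hφmono, ?_⟩
  intro n M x hx l
  rw [ge_iff_le]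
  rcases le_or_gt n M with hnM | hnM
  · have h1 := core M n hnM x hx l
    have hM : 0 < 1 - ε' M := by linarith [hε'lt1 M]
    have hB0 : 0 ≤ (1 - ε' n) * ‖x‖
        + ∑ k ∈ Finset.Icc (n+1) M, (1 - ε' (k-1)) * |l k| := by
      apply add_nonneg
      · exact mul_nonneg (by linarith [hε'lt1 n]) (norm_nonneg x)
      · exact Finset.sum_nonneg fun k _ =>
          mul_nonneg (by linarith [hε'lt1 (k-1)]) (abs_nonneg _)
    have h2 : (1 - ε' n) * ‖x‖ + ∑ k ∈ Finset.Icc (n+1) M, (1 - ε' (k-1)) * |l k| ≤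
        ((1 - ε' n) * ‖x‖ + ∑ k ∈ Finset.Icc (n+1) M, (1 - ε' (k-1)) * |l k|)
          / (1 - ε' M) := by
      rw [le_div_iff₀ hM]
      nlinarith [hε'pos M]
    have h3 : (1 - ε n) * ‖x‖ + ∑ k ∈ Finset.Icc (n+1) M, (1 - ε (k-1)) * |l k| ≤
        (1 - ε' n) * ‖x‖ + ∑ k ∈ Finset.Icc (n+1) M, (1 - ε' (k-1)) * |l k| := by
      apply add_le_add
      · exact mul_le_mul_of_nonneg_right (by linarith [hε'le n]) (norm_nonneg x)
      · exact Finset.sum_le_sum fun k _ =>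
          mul_le_mul_of_nonneg_right (by linarith [hε'le (k-1)]) (abs_nonneg _)
    linarith
  · rw [Finset.Icc_eq_empty (by omega : ¬ n+1 ≤ M)]
    simp only [Finset.sum_empty, add_zero]
    nlinarith [norm_nonneg x, hεpos n]
end

section
/- If a Banach space X contains a canonical ℓ1-type sequence, then X contains a closed subspace isomorphic to ℓ1. -/
open Filter Metric

section Aux

variable {X : Type*} [NormedAddCommGroup X] [NormedSpace ℝ X]

lemma stmt2_unif (e : ℕ → X)
    (hlim : ∀ x : X, Filter.Tendsto (fun n => ‖x + e n‖) Filter.atTop (nhds (‖x‖ + 1)))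
    (K : Set X) (hK : IsCompact K) (ε : ℝ) (hε : 0 < ε) :
    ∃ N : ℕ, ∀ n ≥ N, ∀ x ∈ K, ‖x‖ + 1 - ε ≤ ‖x + e n‖ := by
  obtain ⟨b, hbK, hbfin, hcov⟩ := hK.elim_finite_subcover_image (b := K)
    (c := fun c => ball c (ε/3))
    (fun c _ => isOpen_ball) (fun x hx => Set.mem_biUnion hx (mem_ball_self (by linarith)))
  have hev : ∀ᶠ n in atTop, ∀ c ∈ hbfin.toFinset, ‖c‖ + 1 - ε/3 ≤ ‖c + e n‖ := by
    rw [eventually_all_finset]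
    intro c _
    exact (hlim c).eventually_const_le (by linarith)
  obtain ⟨N, hN⟩ := eventually_atTop.1 hev
  refine ⟨N, fun n hn x hx => ?_⟩
  obtain ⟨c, hc, hxc⟩ := Set.mem_iUnion₂.1 (hcov hx)
  have h1 : ‖c‖ + 1 - ε/3 ≤ ‖c + e n‖ := hN n hn c (hbfin.mem_toFinset.2 hc)
  have h2 : ‖x - c‖ < ε/3 := by rwa [← dist_eq_norm]
  have h3 : ‖c + e n‖ - ‖x - c‖ ≤ ‖x + e n‖ := by
    have h4 := norm_sub_norm_le (c + e n) (x + e n)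
    have h5 : c + e n - (x + e n) = -(x - c) := by abel
    rw [h5, norm_neg] at h4; linarith
  have h6 : ‖x‖ - ‖c‖ ≤ ‖x - c‖ := norm_sub_norm_le x c
  linarith

lemma stmt2_sel (e : ℕ → X) (he : ∀ n, ‖e n‖ ≤ 1)
    (hlim : ∀ x : X, Filter.Tendsto (fun n => ‖x + e n‖) Filter.atTop (nhds (‖x‖ + 1)))
    (E : Submodule ℝ X) (hE : FiniteDimensional ℝ E) (δ : ℝ) (hδ : 0 < δ) (hδ1 : δ ≤ 1) :
    ∃ m : ℕ, ∀ x ∈ E, ∀ t : ℝ, (1 - δ) * (‖x‖ + |t|) ≤ ‖x + t • e m‖ := by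
  set K : Set X := (↑) '' (closedBall (0 : E) (2/δ)) with hKdef
  have hK : IsCompact K := (isCompact_closedBall _ _).image continuous_subtype_val
  obtain ⟨N, hN⟩ := stmt2_unif e hlim K hK δ hδ
  refine ⟨N, fun x hx t => ?_⟩
  rcases eq_or_lt_of_le (by positivity : (0:ℝ) ≤ ‖x‖ + |t|) with h0 | h0
  · have hx0 : ‖x‖ = 0 := by
      have := abs_nonneg t; have := norm_nonneg x; linarith
    have ht0 : |t| = 0 := by have := norm_nonneg x; linarith
    obtain rfl : x = 0 := norm_eq_zero.1 hx0
    obtain rfl : t = 0 := abs_eq_zero.1 ht0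
    simp
  rcases lt_or_ge (|t|) ((δ/2) * (‖x‖ + |t|)) with hcase | hcase
  · -- small t: use triangle inequality
    have h3 : ‖t • e N‖ ≤ |t| := by
      rw [norm_smul, Real.norm_eq_abs]
      nlinarith [he N, abs_nonneg t]
    have h2 : ‖x‖ ≤ ‖x + t • e N‖ + ‖t • e N‖ := by
      have := norm_add_le (x + t • e N) (-(t • e N))
      simpa using this
    nlinarith [norm_nonneg x, abs_nonneg t]
  · -- large t
    have ht : t ≠ 0 := by
      rintro rfl
      simp only [abs_zero, add_zero] at h0 hcase
      nlinarith
    set y : X := t⁻¹ • x with hy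
    have hyE : y ∈ E := E.smul_mem _ hx
    have habs : 0 < |t| := abs_pos.2 ht
    have hyn : ‖y‖ ≤ 2/δ := by
      have h1 : ‖y‖ = |t|⁻¹ * ‖x‖ := by
        rw [hy, norm_smul, Real.norm_eq_abs, abs_inv]
      rw [h1, inv_mul_le_iff₀ habs, ← mul_div_assoc, le_div_iff₀ hδ]
      nlinarith [mul_nonneg hδ.le (abs_nonneg t)]
    have hyK : y ∈ K := ⟨⟨y, hyE⟩, by simpa [Submodule.norm_coe] using hyn, rfl⟩
    have h1 : ‖y‖ + 1 - δ ≤ ‖y + e N‖ := hN N le_rfl y hyK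
    have h2 : ‖x + t • e N‖ = |t| * ‖y + e N‖ := by
      rw [← Real.norm_eq_abs, ← norm_smul, smul_add, hy, smul_smul,
        mul_inv_cancel₀ ht, one_smul]
    have h3 : |t| * ‖y‖ = ‖x‖ := by
      rw [hy, norm_smul, Real.norm_eq_abs, abs_inv, ← mul_assoc,
        mul_inv_cancel₀ (abs_ne_zero.2 ht), one_mul]
    rw [h2]
    nlinarith [mul_le_mul_of_nonneg_left h1 habs.le,
      mul_nonneg hδ.le (norm_nonneg x)]

lemma stmt2_seq (e : ℕ → X) (he : ∀ n, ‖e n‖ ≤ 1)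
    (hlim : ∀ x : X, Filter.Tendsto (fun n => ‖x + e n‖) Filter.atTop (nhds (‖x‖ + 1))) :
    ∃ n : ℕ → ℕ, ∀ k : ℕ, ∀ x ∈ Submodule.span ℝ ((fun j => e (n j)) '' Set.Iio k),
      ∀ t : ℝ, (1 - ((1:ℝ)/2)^(k+2)) * (‖x‖ + |t|) ≤ ‖x + t • e (n k)‖ := by
  -- choice function on lists
  have hpick : ∀ l : List ℕ, ∃ m : ℕ, ∀ x ∈ Submodule.span ℝ (e '' {i | i ∈ l}), ∀ t : ℝ,
      (1 - ((1:ℝ)/2)^(l.length+2)) * (‖x‖ + |t|) ≤ ‖x + t • e m‖ := by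
    intro l
    have hfin : (e '' {i | i ∈ l}).Finite := (l.finite_toSet).image e
    have hFD : FiniteDimensional ℝ (Submodule.span ℝ (e '' {i | i ∈ l})) :=
      FiniteDimensional.span_of_finite ℝ hfin
    have h1 : ((1:ℝ)/2)^(l.length+2) ≤ 1 := pow_le_one₀ (by norm_num) (by norm_num)
    exact stmt2_sel e he hlim _ hFD _ (by positivity) (by linarith)
  choose pick hpick' using hpick
  -- the lists
  let L : ℕ → List ℕ := fun k => Nat.rec [] (fun _ l => l ++ [pick l]) k
  have hL0 : L 0 = [] := rfl
  have hLs : ∀ k, L (k+1) = L k ++ [pick (L k)] := fun k => rfl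
  refine ⟨fun k => pick (L k), ?_⟩
  have hlen : ∀ k, (L k).length = k := by
    intro k; induction k with
    | zero => rfl
    | succ k ih => rw [hLs, List.length_append, ih]; rfl
  have hmem : ∀ k, {i | i ∈ L k} = (fun j => pick (L j)) '' Set.Iio k := by
    intro k; induction k with
    | zero => ext i; simp [hL0]
    | succ k ih =>
        ext i
        rw [hLs]
        simp only [List.mem_append, List.mem_singleton, Set.mem_setOf_eq, Set.mem_image,
          Set.mem_Iio]
        constructor
        · rintro (h | rfl)
          · have h2 : i ∈ {i | i ∈ L k} := h
            rw [ih] at h2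
            obtain ⟨j, hj, rfl⟩ := h2
            exact ⟨j, lt_trans hj (Nat.lt_succ_self k), rfl⟩
          · exact ⟨k, Nat.lt_succ_self k, rfl⟩
        · rintro ⟨j, hj, rfl⟩
          rcases Nat.lt_succ_iff_lt_or_eq.1 hj with hj | rfl
          · left
            have h2 : pick (L j) ∈ {i | i ∈ L k} := by rw [ih]; exact ⟨j, hj, rfl⟩
            exact h2
          · right; rfl
  intro k x hx t
  have hsets : e '' {i | i ∈ L k} = (fun j => e (pick (L j))) '' Set.Iio k := by
    rw [hmem k, ← Set.image_comp]; rfl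
  have := hpick' (L k) x (by rw [hsets]; exact hx) t
  rwa [hlen k] at this

lemma stmt2_lb (e : ℕ → X) (n : ℕ → ℕ)
    (hn : ∀ k : ℕ, ∀ x ∈ Submodule.span ℝ ((fun j => e (n j)) '' Set.Iio k),
      ∀ t : ℝ, (1 - ((1:ℝ)/2)^(k+2)) * (‖x‖ + |t|) ≤ ‖x + t • e (n k)‖)
    (a : ℕ → ℝ) (m : ℕ) :
    (1/2) * ∑ k ∈ Finset.range m, |a k| ≤ ‖∑ k ∈ Finset.range m, a k • e (n k)‖ := by
  have hS : ∀ m : ℕ, ∑ k ∈ Finset.range m, ((1:ℝ)/2)^(k+2) ≤ 1/2 := by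
    intro m
    have h := sum_geometric_two_le m
    have h2 : ∑ k ∈ Finset.range m, ((1:ℝ)/2)^(k+2)
        = (1/4) * ∑ k ∈ Finset.range m, ((1:ℝ)/2)^k := by
      rw [Finset.mul_sum]; apply Finset.sum_congr rfl; intro k _; ring
    rw [h2]; linarith
  have main : ∀ m : ℕ, (1 - ∑ k ∈ Finset.range m, ((1:ℝ)/2)^(k+2)) *
      ∑ k ∈ Finset.range m, |a k| ≤ ‖∑ k ∈ Finset.range m, a k • e (n k)‖ := by
    intro m
    induction m with
    | zero => simp
    | succ m ih =>
      have hxmem : (∑ k ∈ Finset.range m, a k • e (n k)) ∈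
          Submodule.span ℝ ((fun j => e (n j)) '' Set.Iio m) :=
        Submodule.sum_mem _ fun k hk =>
          Submodule.smul_mem _ _ (Submodule.subset_span ⟨k, Finset.mem_range.1 hk, rfl⟩)
      have key := hn m _ hxmem (a m)
      rw [Finset.sum_range_succ, Finset.sum_range_succ, Finset.sum_range_succ]
      have hA : 0 ≤ ∑ k ∈ Finset.range m, |a k| := Finset.sum_nonneg fun k _ => abs_nonneg _
      have hS0 : 0 ≤ ∑ k ∈ Finset.range m, ((1:ℝ)/2)^(k+2) :=
        Finset.sum_nonneg fun k _ => by positivity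
      have hSle := hS m
      have hδ0 : (0:ℝ) ≤ (1/2)^(m+2) := by positivity
      have hδ1 : ((1:ℝ)/2)^(m+2) ≤ 1 := pow_le_one₀ (by norm_num) (by norm_num)
      have h1 := mul_le_mul_of_nonneg_left ih (by linarith : (0:ℝ) ≤ 1 - (1/2)^(m+2))
      nlinarith [key, mul_nonneg (mul_nonneg hδ0 hS0) hA,
        mul_nonneg hS0 (abs_nonneg (a m)),
        norm_nonneg (∑ k ∈ Finset.range m, a k • e (n k))]
  have hA : 0 ≤ ∑ k ∈ Finset.range m, |a k| := Finset.sum_nonneg fun k _ => abs_nonneg _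
  nlinarith [main m, hS m, mul_nonneg (sub_nonneg.2 (hS m)) hA]

end Aux

theorem stmt_2 {X : Type*} [NormedAddCommGroup X] [NormedSpace ℝ X] [CompleteSpace X]
    (e : ℕ → X) (he : ∀ n, ‖e n‖ ≤ 1)
    (hlim : ∀ x : X, Filter.Tendsto (fun n => ‖x + e n‖) Filter.atTop (nhds (‖x‖ + 1))) :
    ∃ Z : Subspace ℝ X, IsClosed (Z : Set X) ∧
      Nonempty (Z ≃L[ℝ] lp (fun _ : ℕ => ℝ) 1) := by
  obtain ⟨n, hn⟩ := stmt2_seq e he hlim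
  set F : ℕ → X := fun k => e (n k) with hF
  have hnorm1 : ∀ a : lp (fun _ : ℕ => ℝ) 1, Summable (fun k => ‖a k‖) := by
    intro a
    have h := (lp.memℓp a).summable (by norm_num : 0 < (1 : ENNReal).toReal)
    simpa [ENNReal.toReal_one, Real.rpow_one] using h
  have hnormeq : ∀ a : lp (fun _ : ℕ => ℝ) 1, ‖a‖ = ∑' k, ‖a k‖ := by
    intro a
    have h := lp.norm_eq_tsum_rpow (by norm_num : 0 < (1 : ENNReal).toReal) a
    simpa [ENNReal.toReal_one, Real.rpow_one] using h
  have hsmul : ∀ (a : lp (fun _ : ℕ => ℝ) 1) (k : ℕ), ‖a k • F k‖ ≤ ‖a k‖ := by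
    intro a k
    rw [norm_smul]
    have h1 := he (n k)
    nlinarith [norm_nonneg (a k), norm_nonneg (e (n k))]
  have hsumn : ∀ a : lp (fun _ : ℕ => ℝ) 1, Summable (fun k => ‖a k • F k‖) := fun a =>
    Summable.of_nonneg_of_le (fun k => norm_nonneg _) (hsmul a) (hnorm1 a)
  have hsum : ∀ a : lp (fun _ : ℕ => ℝ) 1, Summable (fun k => a k • F k) := fun a =>
    Summable.of_norm (hsumn a)
  let g : lp (fun _ : ℕ => ℝ) 1 →ₗ[ℝ] X :=
    { toFun := fun a => ∑' k, a k • F k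
      map_add' := fun a b => by
        simp only [lp.coeFn_add, Pi.add_apply, add_smul]
        exact Summable.tsum_add (hsum a) (hsum b)
      map_smul' := fun c a => by
        simp only [lp.coeFn_smul, Pi.smul_apply, smul_eq_mul, RingHom.id_apply, ← smul_smul]
        exact Summable.tsum_const_smul c (hsum a) }
  have hgbound : ∀ a : lp (fun _ : ℕ => ℝ) 1, ‖g a‖ ≤ 1 * ‖a‖ := by
    intro a
    rw [one_mul, hnormeq a]
    calc ‖∑' k, a k • F k‖ ≤ ∑' k, ‖a k • F k‖ := norm_tsum_le_tsum_norm (hsumn a)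
      _ ≤ ∑' k, ‖a k‖ := Summable.tsum_le_tsum (hsmul a) (hsumn a) (hnorm1 a)
  let T : lp (fun _ : ℕ => ℝ) 1 →L[ℝ] X := g.mkContinuous 1 hgbound
  have hTapp : ∀ a, T a = ∑' k, a k • F k := fun a => rfl
  have hanti : ∀ a : lp (fun _ : ℕ => ℝ) 1, ‖a‖ ≤ 2 * ‖T a‖ := by
    intro a
    have h1 : Tendsto (fun m => ∑ k ∈ Finset.range m, ‖a k‖) atTop (nhds ‖a‖) := by
      rw [hnormeq a]
      exact (hnorm1 a).hasSum.tendsto_sum_nat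
    have h2 : Tendsto (fun m => 2 * ‖∑ k ∈ Finset.range m, a k • F k‖) atTop
        (nhds (2 * ‖T a‖)) := by
      rw [hTapp a]
      exact (((hsum a).hasSum.tendsto_sum_nat).norm).const_mul 2
    refine le_of_tendsto_of_tendsto' h1 h2 (fun m => ?_)
    have h3 := stmt2_lb e n hn (fun k => a k) m
    simp only [Real.norm_eq_abs]
    linarith
  have hantiLip : AntilipschitzWith 2 T :=
    T.antilipschitz_of_bound (K := 2) (fun x => by simpa using hanti x)
  have hinj : Function.Injective T := hantiLip.injective
  set Tl : lp (fun _ : ℕ => ℝ) 1 →ₗ[ℝ] X := (T : lp (fun _ : ℕ => ℝ) 1 →ₗ[ℝ] X) with hTl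
  refine ⟨LinearMap.range Tl, ?_, ?_⟩
  · have h4 : (LinearMap.range Tl : Set X) = Set.range T := by
      rw [hTl]; exact LinearMap.coe_range _
    rw [h4]
    exact hantiLip.isClosed_range T.uniformContinuous
  · have hinjl : Function.Injective Tl := hinj
    let eL : lp (fun _ : ℕ => ℝ) 1 ≃ₗ[ℝ] LinearMap.range Tl := LinearEquiv.ofInjective Tl hinjl
    have hcomp : (Subtype.val ∘ eL) = ⇑T := funext fun x =>
      LinearEquiv.ofInjective_apply Tl (h := hinjl) x
    have hcont1 : Continuous eL := continuous_induced_rng.2 (by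
      rw [hcomp]; exact T.continuous)
    have hcont2 : Continuous eL.symm := by
      have hb : ∀ z : LinearMap.range Tl, ‖eL.symm z‖ ≤ 2 * ‖z‖ := by
        intro z
        have hz : Tl (eL.symm z) = (z : X) := by
          conv_rhs => rw [← eL.apply_symm_apply z]
          exact (LinearEquiv.ofInjective_apply Tl (h := hinjl) _).symm
        have h5 := hanti (eL.symm z)
        rw [show T (eL.symm z) = Tl (eL.symm z) from rfl, hz] at h5
        simpa using h5
      exact AddMonoidHomClass.continuous_of_bound (eL.symm.toLinearMap) 2 hb
    exact ⟨({ eL with continuous_toFun := hcont1, continuous_invFun := hcont2 } :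
      lp (fun _ : ℕ => ℝ) 1 ≃L[ℝ] LinearMap.range Tl).symm⟩
end

section
/- If X and Y are separable almost Daugavet spaces, then X ⊕_∞ Y (the product with norm ‖(x,y)‖ = max{‖x‖,‖y‖}) is an almost Daugavet space. -/
/-- `Y ⊆ X*` is norming: `sup {|f x| : f ∈ Y, ‖f‖ ≤ 1} = ‖x‖` for every `x`. -/
def IsNormingSubspace {X : Type*} [NormedAddCommGroup X] [NormedSpace ℝ X]
    (Y : Subspace ℝ (X →L[ℝ] ℝ)) : Prop :=
  ∀ x : X, ‖x‖ = sSup {r : ℝ | ∃ f ∈ Y, ‖f‖ ≤ 1 ∧ r = |f x|}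

/-- `X` has the Daugavet property with respect to `Y ⊆ X*`: every rank-one operator
`T = y* ⊗ x` with `y* ∈ Y` satisfies `‖Id + T‖ = 1 + ‖T‖`. -/
def HasDaugavetWrt {X : Type*} [NormedAddCommGroup X] [NormedSpace ℝ X]
    (Y : Subspace ℝ (X →L[ℝ] ℝ)) : Prop :=
  ∀ (x : X), ∀ f ∈ Y,
    ‖ContinuousLinearMap.id ℝ X + ContinuousLinearMap.smulRight f x‖ =
      1 + ‖ContinuousLinearMap.smulRight f x‖

/-- `X` is an almost Daugavet space. -/
def AlmostDaugavet (X : Type*) [NormedAddCommGroup X] [NormedSpace ℝ X] : Prop :=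
  ∃ Y : Subspace ℝ (X →L[ℝ] ℝ), IsNormingSubspace Y ∧ HasDaugavetWrt Y

/-- Near-attainment of the norm of a functional, with a nonnegative value. -/
lemma lemB {Y : Type*} [NormedAddCommGroup Y] [NormedSpace ℝ Y]
    (g : Y →L[ℝ] ℝ) (δ : ℝ) (hδ : 0 < δ) :
    ∃ v : Y, ‖v‖ ≤ 1 ∧ 0 ≤ g v ∧ ‖g‖ - δ ≤ g v := by
  obtain ⟨w, hw1, hw2⟩ := ContinuousLinearMap.exists_lt_apply_of_lt_opNorm g
    (show ‖g‖ - δ < ‖g‖ by linarith)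
  rw [Real.norm_eq_abs] at hw2
  by_cases h : 0 ≤ g w
  · exact ⟨w, hw1.le, h, by rw [abs_of_nonneg h] at hw2; linarith⟩
  · push_neg at h
    refine ⟨-w, by simpa using hw1.le, ?_, ?_⟩
    · simp only [map_neg]; linarith
    · rw [abs_of_neg h] at hw2; simp only [map_neg]; linarith

set_option maxHeartbeats 1000000 in
/-- Key quantitative lemma coming from the Daugavet property of `X` w.r.t. `A`:
for `f ∈ A`, `x ∈ X` and `c ≥ 0` there is a unit-ball vector `u` with
`‖u + (f u + c) • x‖` almost `1 + (‖f‖ + c) * ‖x‖`. -/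
lemma lemA {X : Type*} [NormedAddCommGroup X] [NormedSpace ℝ X]
    (A : Subspace ℝ (X →L[ℝ] ℝ)) (hAd : HasDaugavetWrt A)
    {f : X →L[ℝ] ℝ} (hf : f ∈ A) (x : X) (c : ℝ) (hc : 0 ≤ c)
    (ε : ℝ) (hε : 0 < ε) :
    ∃ u : X, ‖u‖ ≤ 1 ∧ 1 + (‖f‖ + c) * ‖x‖ - ε ≤ ‖u + (f u + c) • x‖ := by
  by_cases hx : x = 0
  · subst hx
    have h0 : (ContinuousLinearMap.smulRight (0 : X →L[ℝ] ℝ) (0 : X)) = 0 := by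
      ext z; simp
    have hId : ‖ContinuousLinearMap.id ℝ X‖ = 1 := by
      have := hAd 0 0 A.zero_mem
      rw [h0] at this; simpa using this
    have h1 : (1 : ℝ) - ε < ‖ContinuousLinearMap.id ℝ X‖ := by rw [hId]; linarith
    obtain ⟨u, hu1, hu2⟩ := ContinuousLinearMap.exists_lt_apply_of_lt_opNorm _ h1
    refine ⟨u, hu1.le, ?_⟩
    simp only [ContinuousLinearMap.id_apply] at hu2
    have : ‖u + (f u + c) • (0 : X)‖ = ‖u‖ := by simp
    rw [this]
    simp only [norm_zero, mul_zero]
    linarith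
  have hN : 0 < ‖x‖ := norm_pos_iff.mpr hx
  by_cases hf0 : f = 0
  · subst hf0
    refine ⟨‖x‖⁻¹ • x, ?_, ?_⟩
    · rw [norm_smul, Real.norm_eq_abs, abs_of_pos (inv_pos.mpr hN)]
      rw [inv_mul_cancel₀ hN.ne']
    · simp only [ContinuousLinearMap.zero_apply, zero_add, norm_zero]
      have : ‖x‖⁻¹ • x + c • x = (‖x‖⁻¹ + c) • x := by rw [add_smul]
      rw [this, norm_smul, Real.norm_eq_abs, abs_of_pos (by positivity)]
      have : (‖x‖⁻¹ + c) * ‖x‖ = 1 + c * ‖x‖ := by field_simp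
      rw [this]; linarith
  have hF : 0 < ‖f‖ := norm_pos_iff.mpr hf0
  set F := ‖f‖ with hFdef
  set N := ‖x‖ with hNdef
  have hFc : 0 < F + c := by linarith
  set ε' := min (ε * F / (2 * (F + c))) (F * N / 2) with hε'def
  have hε'pos : 0 < ε' := lt_min (by positivity) (by positivity)
  have hε'1 : ε' ≤ ε * F / (2 * (F + c)) := min_le_left _ _
  have hε'2 : ε' ≤ F * N / 2 := min_le_right _ _
  have hlt : 1 + F * N - ε' <
      ‖ContinuousLinearMap.id ℝ X + ContinuousLinearMap.smulRight f x‖ := by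
    rw [hAd x f hf, ContinuousLinearMap.norm_smulRight_apply]
    linarith
  obtain ⟨w, hw1, hw2⟩ := ContinuousLinearMap.exists_lt_apply_of_lt_opNorm _ hlt
  have hw2' : 1 + F * N - ε' < ‖w + f w • x‖ := by simpa using hw2
  set s := |f w| with hsdef
  have hsF : s ≤ F := by
    have h1 := f.le_opNorm w
    rw [Real.norm_eq_abs] at h1
    nlinarith [norm_nonneg w, hw1.le, hF]
  have hsN : F * N - ε' ≤ s * N := by
    have h1 : ‖w + f w • x‖ ≤ ‖w‖ + s * N := by
      calc ‖w + f w • x‖ ≤ ‖w‖ + ‖f w • x‖ := norm_add_le _ _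
        _ = ‖w‖ + s * N := by rw [norm_smul, Real.norm_eq_abs]
    have := hw1.le
    linarith
  have hs2 : F / 2 ≤ s := by nlinarith
  have hspos : 0 < s := by nlinarith
  have hexu : ∃ u : X, ‖u‖ ≤ 1 ∧ f u = s ∧ 1 + F * N - ε' < ‖u + s • x‖ := by
    set σ : ℝ := if 0 ≤ f w then 1 else -1 with hσdef
    have hσ : σ * f w = s := by
      by_cases h : 0 ≤ f w
      · simp [hσdef, h, hsdef, abs_of_nonneg h]
      · push_neg at h
        simp [hσdef, not_le.mpr h, hsdef, abs_of_neg h]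
    have hσnorm : ‖σ‖ = 1 := by
      by_cases h : 0 ≤ f w <;> simp [hσdef, h]
    refine ⟨σ • w, ?_, ?_, ?_⟩
    · rw [norm_smul, hσnorm, one_mul]; exact hw1.le
    · rw [map_smul, smul_eq_mul, hσ]
    · have heq : σ • w + s • x = σ • (w + f w • x) := by
        rw [smul_add, smul_smul, hσ]
      rw [heq, norm_smul, hσnorm, one_mul]
      exact hw2'
  obtain ⟨u, hu1, hfu, hkey⟩ := hexu
  set M := ‖u + (s + c) • x‖ with hMdef
  have hconv : (s + c) * ‖u + s • x‖ ≤ c * ‖u‖ + s * M := by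
    have hid : (s + c) • (u + s • x) = c • u + s • (u + (s + c) • x) := by
      module
    calc (s + c) * ‖u + s • x‖ = ‖(s + c) • (u + s • x)‖ := by
          rw [norm_smul, Real.norm_eq_abs, abs_of_nonneg (by linarith)]
      _ = ‖c • u + s • (u + (s + c) • x)‖ := by rw [hid]
      _ ≤ ‖c • u‖ + ‖s • (u + (s + c) • x)‖ := norm_add_le _ _
      _ = c * ‖u‖ + s * M := by
          rw [norm_smul c u, norm_smul s (u + (s + c) • x), Real.norm_eq_abs,
            Real.norm_eq_abs, abs_of_nonneg hc, abs_of_nonneg hspos.le]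
  refine ⟨u, hu1, ?_⟩
  rw [hfu]
  -- goal : 1 + (F + c) * N - ε ≤ M
  have hMlow : (s + c) * (1 + F * N - ε') - c ≤ s * M := by
    have h1 : (s + c) * (1 + F * N - ε') ≤ (s + c) * ‖u + s • x‖ :=
      mul_le_mul_of_nonneg_left hkey.le (by linarith)
    have h2 : c * ‖u‖ ≤ c := by nlinarith [norm_nonneg u]
    linarith
  have e1 : (s + c) * ε' ≤ ε * F / 2 := by
    calc (s + c) * ε' ≤ (F + c) * ε' := mul_le_mul_of_nonneg_right (by linarith) hε'pos.le
      _ ≤ (F + c) * (ε * F / (2 * (F + c))) := mul_le_mul_of_nonneg_left hε'1 hFc.le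
      _ = ε * F / 2 := by field_simp
  have e2 : ε * F / 2 ≤ ε * s := by nlinarith [mul_le_mul_of_nonneg_left hs2 hε.le]
  have e3 : s * (c * N) ≤ c * (F * N) := by
    nlinarith [mul_le_mul_of_nonneg_right (mul_le_mul_of_nonneg_left hsF hc) hN.le]
  have e4 : s * ε' + c * ε' ≤ ε * s := by nlinarith [e1, e2]
  have hfin : s * (1 + (F + c) * N - ε) ≤ s * M := by nlinarith [hMlow, e3, e4]
  exact le_of_mul_le_mul_left (by linarith [hfin]) hspos

/-- First-coordinate lower bound for the Daugavet equality on `X × Y`. -/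
lemma lemMainX {X Y : Type*} [NormedAddCommGroup X] [NormedSpace ℝ X]
    [NormedAddCommGroup Y] [NormedSpace ℝ Y]
    (A : Subspace ℝ (X →L[ℝ] ℝ)) (hAd : HasDaugavetWrt A)
    {f : X →L[ℝ] ℝ} (hf : f ∈ A) (g : Y →L[ℝ] ℝ) (x : X) (y : Y)
    (hxy : ‖y‖ ≤ ‖x‖) :
    1 + (‖f‖ + ‖g‖) * ‖x‖ ≤
      ‖ContinuousLinearMap.id ℝ (X × Y) + ContinuousLinearMap.smulRight
        (f.comp (ContinuousLinearMap.fst ℝ X Y) +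
          g.comp (ContinuousLinearMap.snd ℝ X Y)) (x, y)‖ := by
  apply le_of_forall_pos_le_add
  intro ε hε
  set δ := ε / (2 * (‖x‖ + 1)) with hδdef
  have hδ : 0 < δ := by positivity
  obtain ⟨v, hv1, hv2, hv3⟩ := lemB g δ hδ
  obtain ⟨u, hu1, hu2⟩ := lemA A hAd hf x (g v) hv2 (ε / 2) (by positivity)
  have hz : ‖((u, v) : X × Y)‖ ≤ 1 := by
    rw [Prod.norm_def]; exact max_le hu1 hv1
  have happ : (ContinuousLinearMap.id ℝ (X × Y) + ContinuousLinearMap.smulRight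
      (f.comp (ContinuousLinearMap.fst ℝ X Y) +
        g.comp (ContinuousLinearMap.snd ℝ X Y)) (x, y)) (u, v) =
      (u + (f u + g v) • x, v + (f u + g v) • y) := by
    simp [Prod.smul_mk, Prod.mk_add_mk]
  have hle : ‖u + (f u + g v) • x‖ ≤
      ‖ContinuousLinearMap.id ℝ (X × Y) + ContinuousLinearMap.smulRight
        (f.comp (ContinuousLinearMap.fst ℝ X Y) +
          g.comp (ContinuousLinearMap.snd ℝ X Y)) (x, y)‖ := by
    calc ‖u + (f u + g v) • x‖
        ≤ ‖((u + (f u + g v) • x, v + (f u + g v) • y) : X × Y)‖ :=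
          norm_fst_le ((u + (f u + g v) • x, v + (f u + g v) • y) : X × Y)
      _ = _ := by rw [← happ]
      _ ≤ _ := ContinuousLinearMap.unit_le_opNorm _ _ hz
  have hδx : δ * ‖x‖ ≤ ε / 2 := by
    have h5 : δ * (‖x‖ + 1) = ε / 2 := by
      rw [hδdef]; field_simp
    nlinarith [hδ.le]
  have h4 : 1 + (‖f‖ + ‖g‖) * ‖x‖ - ε ≤ ‖u + (f u + g v) • x‖ := by
    have hgl : (‖f‖ + ‖g‖) * ‖x‖ ≤ (‖f‖ + g v) * ‖x‖ + δ * ‖x‖ := by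
      nlinarith [norm_nonneg x]
    linarith
  linarith

/-- Second-coordinate lower bound for the Daugavet equality on `X × Y`. -/
lemma lemMainY {X Y : Type*} [NormedAddCommGroup X] [NormedSpace ℝ X]
    [NormedAddCommGroup Y] [NormedSpace ℝ Y]
    (B : Subspace ℝ (Y →L[ℝ] ℝ)) (hBd : HasDaugavetWrt B)
    (f : X →L[ℝ] ℝ) {g : Y →L[ℝ] ℝ} (hg : g ∈ B) (x : X) (y : Y)
    (hxy : ‖x‖ ≤ ‖y‖) :
    1 + (‖f‖ + ‖g‖) * ‖y‖ ≤
      ‖ContinuousLinearMap.id ℝ (X × Y) + ContinuousLinearMap.smulRight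
        (f.comp (ContinuousLinearMap.fst ℝ X Y) +
          g.comp (ContinuousLinearMap.snd ℝ X Y)) (x, y)‖ := by
  apply le_of_forall_pos_le_add
  intro ε hε
  set δ := ε / (2 * (‖y‖ + 1)) with hδdef
  have hδ : 0 < δ := by positivity
  obtain ⟨u, hu1, hu2, hu3⟩ := lemB f δ hδ
  obtain ⟨v, hv1, hv2⟩ := lemA B hBd hg y (f u) hu2 (ε / 2) (by positivity)
  have hz : ‖((u, v) : X × Y)‖ ≤ 1 := by
    rw [Prod.norm_def]; exact max_le hu1 hv1
  have happ : (ContinuousLinearMap.id ℝ (X × Y) + ContinuousLinearMap.smulRight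
      (f.comp (ContinuousLinearMap.fst ℝ X Y) +
        g.comp (ContinuousLinearMap.snd ℝ X Y)) (x, y)) (u, v) =
      (u + (f u + g v) • x, v + (f u + g v) • y) := by
    simp [Prod.smul_mk, Prod.mk_add_mk]
  have hle : ‖v + (f u + g v) • y‖ ≤
      ‖ContinuousLinearMap.id ℝ (X × Y) + ContinuousLinearMap.smulRight
        (f.comp (ContinuousLinearMap.fst ℝ X Y) +
          g.comp (ContinuousLinearMap.snd ℝ X Y)) (x, y)‖ := by
    calc ‖v + (f u + g v) • y‖
        ≤ ‖((u + (f u + g v) • x, v + (f u + g v) • y) : X × Y)‖ :=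
          norm_snd_le ((u + (f u + g v) • x, v + (f u + g v) • y) : X × Y)
      _ = _ := by rw [← happ]
      _ ≤ _ := ContinuousLinearMap.unit_le_opNorm _ _ hz
  have hδy : δ * ‖y‖ ≤ ε / 2 := by
    have h5 : δ * (‖y‖ + 1) = ε / 2 := by
      rw [hδdef]; field_simp
    nlinarith [hδ.le]
  have hcomm : f u + g v = g v + f u := by ring
  rw [hcomm] at hle
  have h4 : 1 + (‖f‖ + ‖g‖) * ‖y‖ - ε ≤ ‖v + (g v + f u) • y‖ := by
    have hgl : (‖f‖ + ‖g‖) * ‖y‖ ≤ (‖g‖ + f u) * ‖y‖ + δ * ‖y‖ := by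
      nlinarith [norm_nonneg y]
    linarith
  linarith

/-- `X × Y` carries the sup norm, i.e. it is the ℓ∞-sum `X ⊕_∞ Y`. -/
theorem stmt_5 {X Y : Type*} [NormedAddCommGroup X] [NormedSpace ℝ X]
    [CompleteSpace X] [TopologicalSpace.SeparableSpace X]
    [NormedAddCommGroup Y] [NormedSpace ℝ Y]
    [CompleteSpace Y] [TopologicalSpace.SeparableSpace Y]
    (hX : AlmostDaugavet X) (hY : AlmostDaugavet Y) :
    AlmostDaugavet (X × Y) := by
  obtain ⟨A, hAn, hAd⟩ := hX
  obtain ⟨B, hBn, hBd⟩ := hY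
  -- embeddings of functionals
  let Lfst : (X →L[ℝ] ℝ) →ₗ[ℝ] ((X × Y) →L[ℝ] ℝ) :=
    { toFun := fun f => f.comp (ContinuousLinearMap.fst ℝ X Y)
      map_add' := fun a b => ContinuousLinearMap.ext fun z => rfl
      map_smul' := fun c a => ContinuousLinearMap.ext fun z => rfl }
  let Lsnd : (Y →L[ℝ] ℝ) →ₗ[ℝ] ((X × Y) →L[ℝ] ℝ) :=
    { toFun := fun g => g.comp (ContinuousLinearMap.snd ℝ X Y)
      map_add' := fun a b => ContinuousLinearMap.ext fun z => rfl
      map_smul' := fun c a => ContinuousLinearMap.ext fun z => rfl }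
  set Z : Subspace ℝ ((X × Y) →L[ℝ] ℝ) := (A.map Lfst) ⊔ (B.map Lsnd) with hZdef
  have hmemZ : ∀ {F : (X × Y) →L[ℝ] ℝ}, F ∈ Z →
      ∃ f ∈ A, ∃ g ∈ B, F = f.comp (ContinuousLinearMap.fst ℝ X Y) +
        g.comp (ContinuousLinearMap.snd ℝ X Y) := by
    intro F hF
    rcases Submodule.mem_sup.mp hF with ⟨a, ha, b, hb, hab⟩
    rcases Submodule.mem_map.mp ha with ⟨f, hfA, rfl⟩
    rcases Submodule.mem_map.mp hb with ⟨g, hgB, rfl⟩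
    exact ⟨f, hfA, g, hgB, hab.symm⟩
  have hmemZ' : ∀ {f : X →L[ℝ] ℝ} {g : Y →L[ℝ] ℝ}, f ∈ A → g ∈ B →
      f.comp (ContinuousLinearMap.fst ℝ X Y) +
        g.comp (ContinuousLinearMap.snd ℝ X Y) ∈ Z := by
    intro f g hfA hgB
    exact Submodule.add_mem _
      (Submodule.mem_sup_left (Submodule.mem_map_of_mem hfA))
      (Submodule.mem_sup_right (Submodule.mem_map_of_mem hgB))
  have hcompfst : ∀ f : X →L[ℝ] ℝ, ‖f.comp (ContinuousLinearMap.fst ℝ X Y)‖ ≤ ‖f‖ := by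
    intro f
    apply ContinuousLinearMap.opNorm_le_bound _ (norm_nonneg f)
    intro w
    calc ‖(f.comp (ContinuousLinearMap.fst ℝ X Y)) w‖ = ‖f w.1‖ := rfl
      _ ≤ ‖f‖ * ‖w.1‖ := f.le_opNorm w.1
      _ ≤ ‖f‖ * ‖w‖ := mul_le_mul_of_nonneg_left (norm_fst_le w) (norm_nonneg f)
  have hcompsnd : ∀ g : Y →L[ℝ] ℝ, ‖g.comp (ContinuousLinearMap.snd ℝ X Y)‖ ≤ ‖g‖ := by
    intro g
    apply ContinuousLinearMap.opNorm_le_bound _ (norm_nonneg g)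
    intro w
    calc ‖(g.comp (ContinuousLinearMap.snd ℝ X Y)) w‖ = ‖g w.2‖ := rfl
      _ ≤ ‖g‖ * ‖w.2‖ := g.le_opNorm w.2
      _ ≤ ‖g‖ * ‖w‖ := mul_le_mul_of_nonneg_left (norm_snd_le w) (norm_nonneg g)
  refine ⟨Z, ?_, ?_⟩
  · -- norming
    intro z
    have hbdd : BddAbove {r : ℝ | ∃ F ∈ Z, ‖F‖ ≤ 1 ∧ r = |F z|} := by
      refine ⟨‖z‖, ?_⟩
      rintro r ⟨F, hF, hF1, rfl⟩
      calc |F z| = ‖F z‖ := (Real.norm_eq_abs _).symm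
        _ ≤ ‖F‖ * ‖z‖ := F.le_opNorm z
        _ ≤ 1 * ‖z‖ := mul_le_mul_of_nonneg_right hF1 (norm_nonneg z)
        _ = ‖z‖ := one_mul _
    have hne : {r : ℝ | ∃ F ∈ Z, ‖F‖ ≤ 1 ∧ r = |F z|}.Nonempty :=
      ⟨0, 0, Z.zero_mem, by simp⟩
    apply le_antisymm
    · rcases le_total ‖z.2‖ ‖z.1‖ with h | h
      · have hz1 : ‖z‖ = ‖z.1‖ := by rw [Prod.norm_def, max_eq_left h]
        rw [hz1, hAn z.1]
        have hne2 : (0 : ℝ) ∈ {r : ℝ | ∃ f ∈ A, ‖f‖ ≤ 1 ∧ r = |f z.1|} :=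
          ⟨0, A.zero_mem, by simp⟩
        refine csSup_le_csSup hbdd ⟨0, hne2⟩ ?_
        rintro r ⟨f, hfA, hf1, rfl⟩
        refine ⟨f.comp (ContinuousLinearMap.fst ℝ X Y), ?_, ?_, ?_⟩
        · have := hmemZ' hfA B.zero_mem
          simpa using this
        · exact (hcompfst f).trans hf1
        · rfl
      · have hz2 : ‖z‖ = ‖z.2‖ := by rw [Prod.norm_def, max_eq_right h]
        rw [hz2, hBn z.2]
        have hne2 : (0 : ℝ) ∈ {r : ℝ | ∃ g ∈ B, ‖g‖ ≤ 1 ∧ r = |g z.2|} :=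
          ⟨0, B.zero_mem, by simp⟩
        refine csSup_le_csSup hbdd ⟨0, hne2⟩ ?_
        rintro r ⟨g, hgB, hg1, rfl⟩
        refine ⟨g.comp (ContinuousLinearMap.snd ℝ X Y), ?_, ?_, ?_⟩
        · have := hmemZ' A.zero_mem hgB
          simpa using this
        · exact (hcompsnd g).trans hg1
        · rfl
    · apply csSup_le hne
      rintro r ⟨F, hF, hF1, rfl⟩
      calc |F z| = ‖F z‖ := (Real.norm_eq_abs _).symm
        _ ≤ ‖F‖ * ‖z‖ := F.le_opNorm z
        _ ≤ 1 * ‖z‖ := mul_le_mul_of_nonneg_right hF1 (norm_nonneg z)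
        _ = ‖z‖ := one_mul _
  · -- Daugavet property w.r.t. Z
    intro z F hFZ
    obtain ⟨f, hfA, g, hgB, rfl⟩ := hmemZ hFZ
    obtain ⟨x, y⟩ := z
    have hub : ‖f.comp (ContinuousLinearMap.fst ℝ X Y) +
        g.comp (ContinuousLinearMap.snd ℝ X Y)‖ ≤ ‖f‖ + ‖g‖ :=
      (norm_add_le _ _).trans (add_le_add (hcompfst f) (hcompsnd g))
    have hTnorm : ‖ContinuousLinearMap.smulRight
        (f.comp (ContinuousLinearMap.fst ℝ X Y) +
          g.comp (ContinuousLinearMap.snd ℝ X Y)) (x, y)‖ =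
        ‖f.comp (ContinuousLinearMap.fst ℝ X Y) +
          g.comp (ContinuousLinearMap.snd ℝ X Y)‖ * ‖((x, y) : X × Y)‖ :=
      ContinuousLinearMap.norm_smulRight_apply _ _
    have hup : ‖ContinuousLinearMap.id ℝ (X × Y) + ContinuousLinearMap.smulRight
        (f.comp (ContinuousLinearMap.fst ℝ X Y) +
          g.comp (ContinuousLinearMap.snd ℝ X Y)) (x, y)‖ ≤
        1 + ‖ContinuousLinearMap.smulRight
          (f.comp (ContinuousLinearMap.fst ℝ X Y) +
            g.comp (ContinuousLinearMap.snd ℝ X Y)) (x, y)‖ :=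
      (norm_add_le _ _).trans (add_le_add_left ContinuousLinearMap.norm_id_le _)
    rcases le_total ‖y‖ ‖x‖ with h | h
    · have hzn : ‖((x, y) : X × Y)‖ = ‖x‖ := by rw [Prod.norm_def]; exact max_eq_left h
      have hlow := lemMainX A hAd hfA g x y h
      have hT2 : ‖ContinuousLinearMap.smulRight
          (f.comp (ContinuousLinearMap.fst ℝ X Y) +
            g.comp (ContinuousLinearMap.snd ℝ X Y)) (x, y)‖ ≤ (‖f‖ + ‖g‖) * ‖x‖ := by
        rw [hTnorm, hzn]
        exact mul_le_mul_of_nonneg_right hub (norm_nonneg x)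
      linarith
    · have hzn : ‖((x, y) : X × Y)‖ = ‖y‖ := by rw [Prod.norm_def]; exact max_eq_right h
      have hlow := lemMainY B hBd f hgB x y h
      have hT2 : ‖ContinuousLinearMap.smulRight
          (f.comp (ContinuousLinearMap.fst ℝ X Y) +
            g.comp (ContinuousLinearMap.snd ℝ X Y)) (x, y)‖ ≤ (‖f‖ + ‖g‖) * ‖y‖ := by
        rw [hTnorm, hzn]
        exact mul_le_mul_of_nonneg_right hub (norm_nonneg y)
      linarith
end

section
/- Let X be a Banach space that decomposes as an L-sum X = J ⊕_1 Ĵ of two closed subspaces (i.e., ‖j + ĵ‖ = ‖j‖ + ‖ĵ‖ for all j ∈ J, ĵ ∈ Ĵ). If T(J) < 2 and T(Ĵ) < 2, then T(X) < 2, where T denotes the thickness: T(Z) = inf{ε > 0 : the unit sphere S_Z admits a finite subset F ⊂ S_Z such that every z ∈ S_Z is within distance ε of F}. -/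
/-- `F` is a finite inner `ε`-net of the unit sphere of `Z`. -/
def IsInnerNet {Z : Type*} [NormedAddCommGroup Z] (F : Finset Z) (ε : ℝ) : Prop :=
  (∀ y ∈ F, ‖y‖ = 1) ∧ ∀ x : Z, ‖x‖ = 1 → ∃ y ∈ F, ‖x - y‖ ≤ ε

/-- The thickness `T(Z)` of a normed space. -/
noncomputable def thickness (Z : Type*) [NormedAddCommGroup Z] : ℝ :=
  sInf {ε : ℝ | 0 < ε ∧ ∃ F : Finset Z, IsInnerNet F ε}

lemma net_set_nonempty {Z : Type*} [NormedAddCommGroup Z] :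
    {ε : ℝ | 0 < ε ∧ ∃ F : Finset Z, IsInnerNet F ε}.Nonempty := by
  by_cases hz : ∃ z : Z, ‖z‖ = 1
  · obtain ⟨z, hz⟩ := hz
    refine ⟨2, two_pos, {z}, ?_, ?_⟩
    · intro y hy; simp only [Finset.mem_singleton] at hy; subst hy; exact hz
    · intro x hx
      refine ⟨z, Finset.mem_singleton_self z, ?_⟩
      calc ‖x - z‖ ≤ ‖x‖ + ‖z‖ := norm_sub_le x z
      _ = 2 := by rw [hx, hz]; norm_num
  · exact ⟨1, one_pos, ∅, fun y hy => absurd hy (by simp), fun x hx => absurd ⟨x, hx⟩ hz⟩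

lemma exists_good_net {Z : Type*} [NormedAddCommGroup Z] (h : thickness Z < 2) :
    ∃ ε : ℝ, 0 < ε ∧ ε < 2 ∧ ∃ F : Finset Z, IsInnerNet F ε := by
  by_contra hc
  push_neg at hc
  have h2 : (2:ℝ) ≤ thickness Z := by
    refine le_csInf net_set_nonempty (fun ε hε => ?_)
    by_contra hlt
    push_neg at hlt
    obtain ⟨F, hF⟩ := hε.2
    exact hc ε hε.1 hlt F hF
  linarith

lemma thickness_le {Z : Type*} [NormedAddCommGroup Z] {ε : ℝ} (hε : 0 < ε)
    (hF : ∃ F : Finset Z, IsInnerNet F ε) : thickness Z ≤ ε :=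
  csInf_le ⟨0, fun x hx => le_of_lt hx.1⟩ ⟨hε, hF⟩

set_option maxHeartbeats 1000000 in
theorem stmt_7 {X : Type*} [NormedAddCommGroup X] [NormedSpace ℝ X] [CompleteSpace X]
    (J Jhat : Subspace ℝ X) (hJc : IsClosed (J : Set X)) (hJhc : IsClosed (Jhat : Set X))
    (hsum : ∀ x : X, ∃ j ∈ J, ∃ jh ∈ Jhat, x = j + jh)
    (hdisj : J ⊓ Jhat = ⊥)
    (hL : ∀ j ∈ J, ∀ jh ∈ Jhat, ‖j + jh‖ = ‖j‖ + ‖jh‖)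
    (hTJ : thickness J < 2) (hTJh : thickness Jhat < 2) :
    thickness X < 2 := by
  classical
  obtain ⟨ε₁, hε₁0, hε₁2, F₁, hF₁⟩ := exists_good_net hTJ
  obtain ⟨ε₂, hε₂0, hε₂2, F₂, hF₂⟩ := exists_good_net hTJh
  set ε : ℝ := max ε₁ ε₂ with hε
  have hε0 : 0 < ε := lt_of_lt_of_le hε₁0 (le_max_left _ _)
  have hε2 : ε < 2 := max_lt hε₁2 hε₂2
  set δ : ℝ := (2 - ε) / 4 with hδ
  have hδ0 : 0 < δ := by rw [hδ]; linarith
  set ε' : ℝ := ε + 2 * δ with hε'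
  have hε'0 : 0 < ε' := by rw [hε']; linarith
  have hε'2 : ε' < 2 := by rw [hε', hδ]; linarith
  set N : ℕ := ⌈δ⁻¹⌉₊ with hN
  have hN0 : 0 < N := Nat.ceil_pos.mpr (by positivity)
  have hNR : (0:ℝ) < N := by exact_mod_cast hN0
  have hinv : (N:ℝ)⁻¹ ≤ δ := by
    rw [inv_le_comm₀ hNR hδ0]
    exact Nat.le_ceil _
  set F : Finset X :=
    (F₁.image Subtype.val ∪ F₂.image Subtype.val) ∪
      ((Finset.range (N+1) ×ˢ F₁ ×ˢ F₂).image
        (fun p => ((p.1 : ℝ)/N) • p.2.1.1 + (1 - (p.1 : ℝ)/N) • p.2.2.1)) with hFdef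
  have hnorm1 : ∀ y ∈ F₁, ‖(y : X)‖ = 1 := fun y hy => hF₁.1 y hy
  have hnorm2 : ∀ y ∈ F₂, ‖(y : X)‖ = 1 := fun y hy => hF₂.1 y hy
  refine lt_of_le_of_lt (thickness_le hε'0 ⟨F, ?_, ?_⟩) hε'2
  · -- all elements of F have norm 1
    intro y hy
    simp only [hFdef, Finset.mem_union, Finset.mem_image] at hy
    rcases hy with (⟨z, hz, rfl⟩ | ⟨z, hz, rfl⟩) | ⟨⟨i, z, w⟩, hmem, rfl⟩
    · exact hnorm1 z hz
    · exact hnorm2 z hz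
    · simp only [Finset.mem_product, Finset.mem_range] at hmem
      obtain ⟨hi, hz, hw⟩ := hmem
      have hiN : (i : ℝ) ≤ N := by exact_mod_cast Nat.lt_succ_iff.mp hi
      have ht0 : 0 ≤ (i : ℝ)/N := by positivity
      have ht1 : (i : ℝ)/N ≤ 1 := by rw [div_le_one hNR]; exact hiN
      have h1 : ((i:ℝ)/N) • (z : X) ∈ J := J.smul_mem _ z.2
      have h2 : (1 - (i:ℝ)/N) • (w : X) ∈ Jhat := Jhat.smul_mem _ w.2
      show ‖((i:ℝ)/N) • (z:X) + (1 - (i:ℝ)/N) • (w:X)‖ = 1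
      rw [hL _ h1 _ h2, norm_smul, norm_smul, hnorm1 z hz, hnorm2 w hw]
      simp only [Real.norm_eq_abs, abs_of_nonneg ht0,
        abs_of_nonneg (by linarith : (0:ℝ) ≤ 1 - (i:ℝ)/N)]
      ring
  · -- covering
    intro x hx
    obtain ⟨j, hj, jh, hjh, rfl⟩ := hsum x
    have hab : ‖j‖ + ‖jh‖ = 1 := by rw [← hL j hj jh hjh]; exact hx
    by_cases haz : ‖j‖ = 0
    · have hj0 : j = 0 := norm_eq_zero.mp haz
      have hb1 : ‖(⟨jh, hjh⟩ : Jhat)‖ = 1 := by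
        rw [Submodule.coe_norm]; linarith
      obtain ⟨y, hy, hyd⟩ := hF₂.2 _ hb1
      refine ⟨(y : X), ?_, ?_⟩
      · simp only [hFdef, Finset.mem_union, Finset.mem_image]
        exact Or.inl (Or.inr ⟨y, hy, rfl⟩)
      · have heq : ‖j + jh - (y : X)‖ = ‖(⟨jh, hjh⟩ - y : Jhat)‖ := by
          rw [Submodule.coe_norm, hj0]
          norm_num
        rw [heq]
        calc ‖(⟨jh, hjh⟩ - y : Jhat)‖ ≤ ε₂ := hyd
        _ ≤ ε' := by rw [hε']; have := le_max_right ε₁ ε₂; linarith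
    · by_cases hbz : ‖jh‖ = 0
      · have hjh0 : jh = 0 := norm_eq_zero.mp hbz
        have ha1 : ‖(⟨j, hj⟩ : J)‖ = 1 := by
          rw [Submodule.coe_norm]; linarith
        obtain ⟨y, hy, hyd⟩ := hF₁.2 _ ha1
        refine ⟨(y : X), ?_, ?_⟩
        · simp only [hFdef, Finset.mem_union, Finset.mem_image]
          exact Or.inl (Or.inl ⟨y, hy, rfl⟩)
        · have heq : ‖j + jh - (y : X)‖ = ‖(⟨j, hj⟩ - y : J)‖ := by
            rw [Submodule.coe_norm, hjh0]
            norm_num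
          rw [heq]
          calc ‖(⟨j, hj⟩ - y : J)‖ ≤ ε₁ := hyd
          _ ≤ ε' := by rw [hε']; have := le_max_left ε₁ ε₂; linarith
      · -- main case
        have ha' : 0 < ‖j‖ := lt_of_le_of_ne (norm_nonneg _) (Ne.symm haz)
        have hb' : 0 < ‖jh‖ := lt_of_le_of_ne (norm_nonneg _) (Ne.symm hbz)
        have hjmem : ‖j‖⁻¹ • j ∈ J := J.smul_mem _ hj
        have hjhmem : ‖jh‖⁻¹ • jh ∈ Jhat := Jhat.smul_mem _ hjh
        have hu1 : ‖(⟨‖j‖⁻¹ • j, hjmem⟩ : J)‖ = 1 := by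
          rw [Submodule.coe_norm]
          rw [norm_smul, Real.norm_eq_abs, abs_of_pos (inv_pos.mpr ha')]
          field_simp
        have hv1 : ‖(⟨‖jh‖⁻¹ • jh, hjhmem⟩ : Jhat)‖ = 1 := by
          rw [Submodule.coe_norm]
          rw [norm_smul, Real.norm_eq_abs, abs_of_pos (inv_pos.mpr hb')]
          field_simp
        obtain ⟨y, hy, hyd⟩ := hF₁.2 _ hu1
        obtain ⟨w, hw, hwd⟩ := hF₂.2 _ hv1
        set i : ℕ := ⌊‖j‖ * N⌋₊ with hi
        set t : ℝ := (i : ℝ)/N with htdef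
        have hiN : i ≤ N := by
          have h1 : ‖j‖ ≤ 1 := by linarith [norm_nonneg jh]
          have : ‖j‖ * N ≤ N := by nlinarith
          calc i = ⌊‖j‖ * N⌋₊ := rfl
          _ ≤ ⌊(N:ℝ)⌋₊ := Nat.floor_le_floor this
          _ = N := Nat.floor_natCast N
        have hfl : (i : ℝ) ≤ ‖j‖ * N := Nat.floor_le (by positivity)
        have hfu : ‖j‖ * N < (i : ℝ) + 1 := Nat.lt_floor_add_one _
        have htle : t ≤ ‖j‖ := by
          rw [htdef, div_le_iff₀ hNR]; linarith
        have hta : ‖j‖ - t ≤ δ := by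
          have h1 : ‖j‖ - t ≤ (N:ℝ)⁻¹ := by
            rw [htdef, inv_eq_one_div, sub_le_iff_le_add, ← add_div, le_div_iff₀ hNR]
            linarith
          linarith
        refine ⟨t • (y : X) + (1 - t) • (w : X), ?_, ?_⟩
        · simp only [hFdef, Finset.mem_union, Finset.mem_image]
          refine Or.inr ⟨⟨i, y, w⟩, ?_, rfl⟩
          simp only [Finset.mem_product, Finset.mem_range]
          exact ⟨Nat.lt_succ_of_le hiN, hy, hw⟩
        · have key : j + jh - (t • (y : X) + (1 - t) • (w : X)) =
              (j - t • (y : X)) + (jh - (1 - t) • (w : X)) := by abel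
          have hm1 : j - t • (y : X) ∈ J := J.sub_mem hj (J.smul_mem _ y.2)
          have hm2 : jh - (1 - t) • (w : X) ∈ Jhat := Jhat.sub_mem hjh (Jhat.smul_mem _ w.2)
          rw [key, hL _ hm1 _ hm2]
          have hyd' : ‖‖j‖⁻¹ • j - (y : X)‖ ≤ ε₁ := by
            simpa using hyd
          have hwd' : ‖‖jh‖⁻¹ • jh - (w : X)‖ ≤ ε₂ := by
            simpa using hwd
          have e1 : ‖j - t • (y : X)‖ ≤ ‖j‖ * ε₁ + δ := by
            have hsplit : j - t • (y : X) =
                ‖j‖ • (‖j‖⁻¹ • j - (y:X)) + (‖j‖ - t) • (y : X) := by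
              rw [smul_sub, smul_smul, mul_inv_cancel₀ (ne_of_gt ha')]
              module
            rw [hsplit]
            calc ‖‖j‖ • (‖j‖⁻¹ • j - (y:X)) + (‖j‖ - t) • (y : X)‖
                ≤ ‖‖j‖ • (‖j‖⁻¹ • j - (y:X))‖ + ‖(‖j‖ - t) • (y : X)‖ := norm_add_le _ _
            _ = ‖j‖ * ‖‖j‖⁻¹ • j - (y:X)‖ + |‖j‖ - t| * ‖(y:X)‖ := by
                rw [norm_smul, norm_smul, Real.norm_eq_abs, Real.norm_eq_abs,
                  abs_of_pos ha']
            _ ≤ ‖j‖ * ε₁ + δ := by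
                rw [hnorm1 y hy, abs_of_nonneg (by linarith : (0:ℝ) ≤ ‖j‖ - t)]
                nlinarith
          have e2 : ‖jh - (1 - t) • (w : X)‖ ≤ ‖jh‖ * ε₂ + δ := by
            have hsplit : jh - (1 - t) • (w : X) =
                ‖jh‖ • (‖jh‖⁻¹ • jh - (w:X)) + (‖jh‖ - (1 - t)) • (w : X) := by
              rw [smul_sub, smul_smul, mul_inv_cancel₀ (ne_of_gt hb')]
              module
            rw [hsplit]
            calc ‖‖jh‖ • (‖jh‖⁻¹ • jh - (w:X)) + (‖jh‖ - (1-t)) • (w : X)‖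
                ≤ ‖‖jh‖ • (‖jh‖⁻¹ • jh - (w:X))‖ + ‖(‖jh‖ - (1-t)) • (w : X)‖ :=
                  norm_add_le _ _
            _ = ‖jh‖ * ‖‖jh‖⁻¹ • jh - (w:X)‖ + |‖jh‖ - (1-t)| * ‖(w:X)‖ := by
                rw [norm_smul, norm_smul, Real.norm_eq_abs, Real.norm_eq_abs,
                  abs_of_pos hb']
            _ ≤ ‖jh‖ * ε₂ + δ := by
                have habs : |‖jh‖ - (1 - t)| = ‖j‖ - t := by
                  rw [abs_of_nonpos (by linarith)]; linarith
                rw [hnorm2 w hw, habs]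
                nlinarith
          have hsum' : ‖j‖ * ε₁ + ‖jh‖ * ε₂ ≤ ε := by
            have h1 : ε₁ ≤ ε := le_max_left _ _
            have h2 : ε₂ ≤ ε := le_max_right _ _
            nlinarith [norm_nonneg j, norm_nonneg jh]
          rw [hε']
          linarith
end

section
/- For 1 ≤ p < ∞, the thickness of ℓ_p equals 2^{1/p}: T(ℓ_p) = 2^{1/p}. -/
open Real Filter

/-- Splitting the `q`-th power of the norm at one coordinate. -/
lemma lp_norm_split (p : ENNReal) (hq : 0 < p.toReal) (f : lp (fun _ : ℕ => ℝ) p) (i : ℕ) :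
    ‖f‖ ^ p.toReal = ‖f i‖ ^ p.toReal + ∑' n, if n = i then 0 else ‖f n‖ ^ p.toReal := by
  classical
  rw [lp.norm_rpow_eq_tsum hq f, ((lp.memℓp f).summable hq).tsum_eq_add_tsum_ite i]

theorem stmt_15 (p : ENNReal) [Fact (1 ≤ p)] (hp : p ≠ ⊤) :
    thickness (lp (fun _ : ℕ => ℝ) p) = (2 : ℝ) ^ (1 / p.toReal) := by
  classical
  set q := p.toReal with hqdef
  have hq1 : 1 ≤ q := by
    have h1 : (1 : ENNReal) ≤ p := Fact.out
    simpa using ENNReal.toReal_mono hp h1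
  have hq0 : 0 < q := lt_of_lt_of_le one_pos hq1
  have hp0 : p ≠ 0 := by
    intro h
    have h1 : (1 : ENNReal) ≤ p := Fact.out
    rw [h] at h1
    simp at h1
  set E := lp (fun _ : ℕ => ℝ) p with hE
  -- coordinate helpers
  have single_self : ∀ (a : ℝ) (i : ℕ), (lp.single p i a : E) i = a := by
    intro a i; exact lp.single_apply_self (E := fun _ : ℕ => ℝ) p i a
  have single_ne : ∀ (a : ℝ) (i n : ℕ), n ≠ i → (lp.single p i a : E) n = 0 := by
    intro a i n hn; exact lp.single_apply_ne (E := fun _ : ℕ => ℝ) p i a hn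
  have norm_single : ∀ i : ℕ, ‖(lp.single p i (1 : ℝ) : E)‖ = 1 := by
    intro i
    simpa using lp.norm_single (E := fun _ : ℕ => ℝ) (pos_iff_ne_zero.mpr hp0) i (1 : ℝ)
  have key : ∀ (f : E) (i : ℕ),
      ‖f‖ ^ q = ‖f i‖ ^ q + ∑' n, if n = i then 0 else ‖f n‖ ^ q :=
    fun f i => lp_norm_split p hq0 f i
  -- from `a^q ≤ b` deduce `a ≤ b^(1/q)`
  have rpow_le : ∀ a b : ℝ, 0 ≤ a → 0 ≤ b → a ^ q ≤ b → a ≤ b ^ (1 / q) := by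
    intro a b ha hb h
    have h2 := Real.rpow_le_rpow (Real.rpow_nonneg ha q) h (by positivity : (0:ℝ) ≤ 1 / q)
    rw [one_div, Real.rpow_rpow_inv ha hq0.ne'] at h2
    rwa [one_div]
  have coord_le : ∀ (f : E), ‖f‖ = 1 → ∀ i, |f i| ≤ 1 := by
    intro f hf i
    have := lp.norm_apply_le_norm hp0 f i
    simpa [hf] using this
  -- the tail of a unit vector
  have tail_eq : ∀ (f : E), ‖f‖ = 1 → ∀ i,
      (∑' n, if n = i then 0 else ‖f n‖ ^ q) = 1 - |f i| ^ q := by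
    intro f hf i
    have h := key f i
    rw [hf, Real.one_rpow] at h
    simp only [Real.norm_eq_abs] at h ⊢
    linarith
  -- norm of `f - single i a` for unit `f`
  have norm_sub_single : ∀ (f : E), ‖f‖ = 1 → ∀ (a : ℝ) (i : ℕ),
      ‖f - lp.single p i a‖ ^ q = |f i - a| ^ q + (1 - |f i| ^ q) := by
    intro f hf a i
    have h := key (f - lp.single p i a) i
    have happ : (f - lp.single p i a : E) i = f i - a := by
      have h1 := single_self a i
      simp [h1]
    have htail : (∑' n, if n = i then 0 else ‖(f - lp.single p i a : E) n‖ ^ q)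
        = ∑' n, if n = i then 0 else ‖f n‖ ^ q := by
      congr 1; funext n
      by_cases hn : n = i
      · simp [hn]
      · have h2 := single_ne a i n hn
        simp [hn, h2]
    rw [h, happ, htail, tail_eq f hf i, Real.norm_eq_abs]
  -- Upper bound: `{e, -e}` is a `2^(1/q)`-net
  have mem_S : (2 : ℝ) ^ (1 / q) ∈
      {ε : ℝ | 0 < ε ∧ ∃ F : Finset E, IsInnerNet F ε} := by
    refine ⟨Real.rpow_pos_of_pos two_pos _, ?_⟩
    set e : E := lp.single p 0 (1 : ℝ) with he
    refine ⟨{e, -e}, ?_, ?_⟩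
    · intro y hy
      rcases Finset.mem_insert.1 hy with rfl | hy
      · exact norm_single 0
      · rw [Finset.mem_singleton.1 hy, norm_neg]; exact norm_single 0
    · intro x hx
      have main : ∀ a : ℝ, |a| = 1 → 0 ≤ a * x 0 →
          ‖x - lp.single p 0 a‖ ≤ (2:ℝ) ^ (1 / q) := by
        intro a ha hax
        have hx0 : |x 0| ≤ 1 := coord_le x hx 0
        have h1 : |x 0 - a| = 1 - |x 0| := by
          rcases (abs_eq (by norm_num : (0:ℝ) ≤ 1)).1 ha with rfl | rfl
          · have hx0' : 0 ≤ x 0 := by nlinarith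
            rw [abs_of_nonpos (by linarith [abs_le.1 hx0]), abs_of_nonneg hx0']
            ring
          · have hx0' : x 0 ≤ 0 := by nlinarith
            rw [abs_of_nonneg (by linarith [abs_le.1 hx0]), abs_of_nonpos hx0']
            ring
        refine rpow_le _ _ (norm_nonneg _) (by norm_num) ?_
        rw [norm_sub_single x hx a 0, h1]
        have h2 : (1 - |x 0|) ^ q ≤ 1 :=
          Real.rpow_le_one (by linarith [abs_le.1 hx0]) (sub_le_self _ (abs_nonneg _)) hq0.le
        have h3 : 0 ≤ |x 0| ^ q := Real.rpow_nonneg (abs_nonneg _) q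
        linarith
      by_cases hsign : 0 ≤ x 0
      · refine ⟨e, by simp, ?_⟩
        simpa [he] using main 1 (by norm_num) (by simpa using hsign)
      · refine ⟨-e, by simp, ?_⟩
        have hne : (-e : E) = lp.single p 0 (-1 : ℝ) := by
          rw [he, ← lp.single_neg]
        rw [hne]
        exact main (-1) (by norm_num) (by nlinarith [le_of_not_ge hsign])
  -- Lower bound: every ε in the set is at least 2^(1/q)
  have lower : ∀ ε ∈ {ε : ℝ | 0 < ε ∧ ∃ F : Finset E, IsInnerNet F ε},
      (2 : ℝ) ^ (1 / q) ≤ ε := by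
    rintro ε ⟨hε, F, hF1, hF2⟩
    have hεq : (2 : ℝ) ≤ ε ^ q := by
      have hle : ∀ η ∈ Set.Ioo (0:ℝ) 1, (1 - η) ^ q + (1 - η) ≤ ε ^ q := by
        rintro η ⟨hη0, hη1⟩
        -- find an index where all elements of F are small
        have hev : ∀ᶠ N in atTop, ∀ y ∈ F, |(y : E) N| ≤ η := by
          rw [eventually_all_finset]
          intro y hy
          have hsum : Summable (fun n => ‖(y : E) n‖ ^ q) := (lp.memℓp y).summable hq0
          have htend := hsum.tendsto_atTop_zero
          have hev2 : ∀ᶠ n in atTop, ‖(y : E) n‖ ^ q < η ^ q :=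
            htend.eventually_lt_const (Real.rpow_pos_of_pos hη0 q)
          filter_upwards [hev2] with n hn
          by_contra hcon
          exact absurd (Real.rpow_le_rpow hη0.le (le_of_not_ge hcon) hq0.le)
            (not_le.2 (by simpa [Real.norm_eq_abs] using hn))
        obtain ⟨N, hN⟩ := hev.exists
        obtain ⟨y, hyF, hxy⟩ := hF2 (lp.single p N (1:ℝ)) (norm_single N)
        have hyN : |(y : E) N| ≤ η := hN y hyF
        -- compute the norm : ‖single - y‖^q = ‖-(y - single)‖^q = ‖y - single‖^q
        have hflip : ‖(lp.single p N (1:ℝ) : E) - y‖ = ‖y - lp.single p N (1:ℝ)‖ := by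
          rw [← norm_neg, neg_sub]
        have hnormval : ‖(lp.single p N (1:ℝ) : E) - y‖ ^ q
            = |(y : E) N - 1| ^ q + (1 - |(y : E) N| ^ q) := by
          rw [hflip, norm_sub_single y (hF1 y hyF) 1 N]
        have h1 : (1 - η) ^ q ≤ |(y : E) N - 1| ^ q := by
          apply Real.rpow_le_rpow (by linarith) ?_ hq0.le
          have habs := abs_le.1 hyN
          calc 1 - η ≤ 1 - (y : E) N := by linarith [habs.2]
            _ ≤ |(y : E) N - 1| := by rw [abs_sub_comm]; exact le_abs_self _
        have h2 : |(y : E) N| ^ q ≤ η := by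
          rcases eq_or_lt_of_le (abs_nonneg ((y : E) N)) with h | h
          · rw [← h, Real.zero_rpow hq0.ne']; exact hη0.le
          · calc |(y : E) N| ^ q ≤ |(y : E) N| ^ (1:ℝ) :=
                Real.rpow_le_rpow_of_exponent_ge h (by linarith) hq1
              _ = |(y : E) N| := Real.rpow_one _
              _ ≤ η := hyN
        have h3 : ‖(lp.single p N (1:ℝ) : E) - y‖ ^ q ≤ ε ^ q :=
          Real.rpow_le_rpow (norm_nonneg _) hxy hq0.le
        rw [hnormval] at h3
        linarith
      -- take the limit along `𝓝[>] 0`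
      have hc0 : ContinuousAt (fun η : ℝ => 1 - η) 0 :=
        (continuous_const.sub continuous_id).continuousAt
      have hc1 : ContinuousAt (fun η : ℝ => (1 - η) ^ q + (1 - η)) 0 := by
        exact (hc0.rpow_const (Or.inl (by norm_num))).add hc0
      have hcont : Filter.Tendsto (fun η : ℝ => (1 - η) ^ q + (1 - η))
          (nhdsWithin 0 (Set.Ioi 0)) (nhds 2) := by
        have h2 := (hc1.continuousWithinAt (s := Set.Ioi (0:ℝ))).tendsto
        simpa [Real.one_rpow, show (1:ℝ)+1 = 2 from by norm_num] using h2
      refine le_of_tendsto hcont (Filter.eventually_of_mem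
        (Ioo_mem_nhdsGT_of_mem (by norm_num : (0:ℝ) ∈ Set.Ico (0:ℝ) 1)) ?_)
      exact fun η hη => hle η hη
    have h := Real.rpow_le_rpow (by norm_num : (0:ℝ) ≤ 2) hεq (by positivity : (0:ℝ) ≤ 1/q)
    rw [one_div, Real.rpow_rpow_inv hε.le hq0.ne'] at h
    rwa [one_div]
  exact le_antisymm (csInf_le ⟨(2:ℝ) ^ (1/q), lower⟩ mem_S) (le_csInf ⟨_, mem_S⟩ lower)
end

section
/- Let X be a separable Banach space admitting a sequence (e_n) in its closed unit ball with lim_{n→∞} ‖x + e_n‖ = ‖x‖ + 1 for all x ∈ X. Then the unit sphere S_X admits no finite inner ε-net for any ε < 2, i.e., T(X) = 2. -/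
theorem stmt_16 {X : Type*} [NormedAddCommGroup X] [NormedSpace ℝ X]
    [CompleteSpace X] [TopologicalSpace.SeparableSpace X]
    (e : ℕ → X) (he : ∀ n, ‖e n‖ ≤ 1)
    (hlim : ∀ x : X, Filter.Tendsto (fun n => ‖x + e n‖) Filter.atTop (nhds (‖x‖ + 1))) :
    (∀ ε : ℝ, ε < 2 → ¬ ∃ F : Finset X, IsInnerNet F ε) ∧ thickness X = 2 := by
  have h0 : Filter.Tendsto (fun n => ‖e n‖) Filter.atTop (nhds 1) := by
    simpa using hlim 0
  have hpos : ∀ᶠ n in Filter.atTop, (0:ℝ) < ‖e n‖ :=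
    Filter.Tendsto.eventually_lt tendsto_const_nhds h0 zero_lt_one
  have habs : Filter.Tendsto (fun n => |1 - ‖e n‖|) Filter.atTop (nhds 0) := by
    have h1 := (tendsto_const_nhds (x := (1:ℝ))).sub h0
    have h2 := h1.abs
    norm_num at h2
    exact h2
  have main : ∀ ε : ℝ, ε < 2 → ¬ ∃ F : Finset X, IsInnerNet F ε := by
    rintro ε hε ⟨F, hF1, hF2⟩
    have h1 : ∀ᶠ n in Filter.atTop, ∀ y ∈ F, ε + |1 - ‖e n‖| < ‖y + e n‖ := by
      rw [Filter.eventually_all_finset]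
      intro y hy
      have hy1 := hF1 y hy
      have hty : Filter.Tendsto (fun n => ‖y + e n‖) Filter.atTop (nhds 2) := by
        have := hlim y; rw [hy1] at this; norm_num at this; exact this
      have hta : Filter.Tendsto (fun n => ε + |1 - ‖e n‖|) Filter.atTop (nhds (ε + 0)) :=
        tendsto_const_nhds.add habs
      exact hta.eventually_lt hty (by linarith)
    obtain ⟨n, hn1, hn2⟩ := (h1.and hpos).exists
    set c := ‖e n‖ with hc
    have hx : ‖-(c⁻¹ • e n)‖ = 1 := by
      rw [norm_neg, norm_smul, norm_inv, Real.norm_eq_abs, abs_of_pos hn2]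
      field_simp
      exact hc.symm
    obtain ⟨y, hyF, hyε⟩ := hF2 _ hx
    have key := hn1 y hyF
    have hnorm : ‖-(c⁻¹ • e n) - y‖ = ‖y + c⁻¹ • e n‖ := by
      rw [← norm_neg, neg_sub, sub_neg_eq_add]
    have hdiff : ‖e n - c⁻¹ • e n‖ = |1 - c| := by
      have : e n - c⁻¹ • e n = (1 - c⁻¹) • e n := by
        rw [sub_smul, one_smul]
      rw [this, norm_smul, Real.norm_eq_abs, ← hc]
      have h3 : |1 - c⁻¹| * c = |(1 - c⁻¹) * c| := by rw [abs_mul, abs_of_pos hn2]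
      have h4 : (1 - c⁻¹) * c = c - 1 := by field_simp
      rw [h3, h4, abs_sub_comm]
    have htri : ‖y + e n‖ ≤ ‖y + c⁻¹ • e n‖ + ‖e n - c⁻¹ • e n‖ := by
      have : y + e n = (y + c⁻¹ • e n) + (e n - c⁻¹ • e n) := by abel
      rw [this]; exact norm_add_le _ _
    rw [hnorm] at hyε
    rw [hdiff] at htri
    linarith
  refine ⟨main, ?_⟩
  have h2mem : (2:ℝ) ∈ {ε : ℝ | 0 < ε ∧ ∃ F : Finset X, IsInnerNet F ε} := by
    obtain ⟨n, hn⟩ := hpos.exists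
    refine ⟨two_pos, {‖e n‖⁻¹ • e n}, ?_, ?_⟩
    · intro y hy
      rw [Finset.mem_singleton] at hy
      rw [hy, norm_smul, norm_inv, Real.norm_eq_abs, abs_of_pos hn]
      field_simp
    · intro x hx
      refine ⟨_, Finset.mem_singleton_self _, ?_⟩
      have h1 : ‖‖e n‖⁻¹ • e n‖ = 1 := by
        rw [norm_smul, norm_inv, Real.norm_eq_abs, abs_of_pos hn]; field_simp
      calc ‖x - ‖e n‖⁻¹ • e n‖ ≤ ‖x‖ + ‖‖e n‖⁻¹ • e n‖ := norm_sub_le _ _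
        _ = 2 := by rw [hx, h1]; norm_num
  apply le_antisymm
  · exact csInf_le ⟨0, fun ε hε => le_of_lt hε.1⟩ h2mem
  · apply le_csInf ⟨2, h2mem⟩
    intro ε hε
    by_contra h
    exact main ε (lt_of_not_ge h) hε.2
end

section
/- Let X be a separable Banach space whose unit sphere S_X admits no finite inner ε-net consisting of elements of S_X for any ε < 2. Then there exists a sequence (e_n) in the closed unit ball of X such that for every x ∈ X, lim_{n→∞} ‖x + e_n‖ = ‖x‖ + 1. -/
lemma key_lemma_s17 {X : Type*} [NormedAddCommGroup X] [NormedSpace ℝ X]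
    (hno : ∀ ε : ℝ, ε < 2 → ¬ ∃ F : Finset X, IsInnerNet F ε)
    (s : Finset X) (δ : ℝ) (hδ : 0 < δ) :
    ∃ e : X, ‖e‖ = 1 ∧ ∀ x ∈ s, ‖x‖ + 1 - δ ≤ ‖x + e‖ := by
  classical
  set M : ℝ := 1 + ∑ x ∈ s, ‖x‖ with hM
  have hM1 : (1:ℝ) ≤ M := by
    have : (0:ℝ) ≤ ∑ x ∈ s, ‖x‖ := Finset.sum_nonneg fun x _ => norm_nonneg x
    simp [hM]; linarith
  have hMpos : (0:ℝ) < M := by linarith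
  have hxM : ∀ x ∈ s, ‖x‖ ≤ M := by
    intro x hx
    have := Finset.single_le_sum (f := fun x : X => ‖x‖) (fun y _ => norm_nonneg y) hx
    simp only [hM]; linarith
  set ε : ℝ := 2 - δ / M with hε
  have hεlt : ε < 2 := by
    have : 0 < δ / M := div_pos hδ hMpos
    simp [hε]; linarith
  set F : Finset X := (s.filter (fun x => x ≠ 0)).image (fun x => -(‖x‖⁻¹ • x)) with hF
  have hFnorm : ∀ y ∈ F, ‖y‖ = 1 := by
    intro y hy
    simp only [hF, Finset.mem_image, Finset.mem_filter] at hy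
    obtain ⟨x, ⟨-, hx0⟩, rfl⟩ := hy
    have hxn : ‖x‖ ≠ 0 := norm_ne_zero_iff.mpr hx0
    rw [norm_neg, norm_smul, norm_inv, norm_norm, inv_mul_cancel₀ hxn]
  have hnot := hno ε hεlt
  push_neg at hnot
  have hnot2 := hnot F
  rw [IsInnerNet] at hnot2
  push_neg at hnot2
  obtain ⟨e, he1, he2⟩ := hnot2 hFnorm
  refine ⟨e, he1, fun x hx => ?_⟩
  by_cases hx0 : x = 0
  · simp [hx0, he1]; linarith
  · have hyF : -(‖x‖⁻¹ • x) ∈ F := by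
      simp only [hF, Finset.mem_image, Finset.mem_filter]
      exact ⟨x, ⟨hx, hx0⟩, rfl⟩
    have hfar := he2 _ hyF
    have hxn : ‖x‖ ≠ 0 := norm_ne_zero_iff.mpr hx0
    have hxpos : (0:ℝ) < ‖x‖ := norm_pos_iff.mpr hx0
    set u : X := ‖x‖⁻¹ • x with hu
    have hun : ‖u‖ = 1 := by
      rw [hu, norm_smul, norm_inv, norm_norm, inv_mul_cancel₀ hxn]
    have hxu : x = ‖x‖ • u := by
      rw [hu, smul_smul, mul_inv_cancel₀ hxn, one_smul]
    have hfar' : 2 - δ / M < ‖u + e‖ := by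
      have : e - -(‖x‖⁻¹ • x) = u + e := by rw [hu]; abel
      rw [this] at hfar; exact hfar
    have hδM : δ / M ≤ δ := by
      rw [div_le_iff₀ hMpos]; nlinarith
    rcases le_or_gt ‖x‖ 1 with ht | ht
    · -- small case
      have h1 : ‖u + e‖ ≤ ‖x + e‖ + ‖u - x‖ := by
        have := norm_add_le (x + e) (u - x)
        have h2 : x + e + (u - x) = u + e := by abel
        rw [h2] at this; exact this
      have h3 : ‖u - x‖ = 1 - ‖x‖ := by
        have : u - x = (1 - ‖x‖) • u := by
          rw [sub_smul, one_smul, ← hxu]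
        rw [this, norm_smul, hun, mul_one, Real.norm_eq_abs, abs_of_nonneg (by linarith)]
      nlinarith
    · -- large case
      have h1 : x + e = ‖x‖ • (u + e) - (‖x‖ - 1) • e := by
        rw [smul_add, sub_smul, one_smul]
        nth_rewrite 1 [hxu]; abel
      have h2 : ‖x‖ * ‖u + e‖ - (‖x‖ - 1) ≤ ‖x + e‖ := by
        have := norm_sub_norm_le (‖x‖ • (u + e)) ((‖x‖ - 1) • e)
        rw [← h1, norm_smul, norm_smul, Real.norm_eq_abs, Real.norm_eq_abs,
          abs_of_nonneg (norm_nonneg x), abs_of_nonneg (by linarith : (0:ℝ) ≤ ‖x‖ - 1),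
          he1, mul_one] at this
        linarith
      have hxMle : ‖x‖ ≤ M := hxM x hx
      have : ‖x‖ * (2 - δ / M) ≤ ‖x‖ * ‖u + e‖ :=
        mul_le_mul_of_nonneg_left (le_of_lt hfar') (norm_nonneg x)
      have hd : ‖x‖ * (δ / M) ≤ δ := by
        rw [mul_div_assoc'] at *
        rw [div_le_iff₀ hMpos]
        nlinarith
      nlinarith
  
theorem stmt_17 {X : Type*} [NormedAddCommGroup X] [NormedSpace ℝ X]
    [CompleteSpace X] [TopologicalSpace.SeparableSpace X]
    (hno : ∀ ε : ℝ, ε < 2 → ¬ ∃ F : Finset X, IsInnerNet F ε) :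
    ∃ e : ℕ → X, (∀ n, ‖e n‖ ≤ 1) ∧
      ∀ x : X, Filter.Tendsto (fun n => ‖x + e n‖) Filter.atTop (nhds (‖x‖ + 1)) := by
  classical
  obtain ⟨d, hd⟩ := TopologicalSpace.exists_dense_seq X
  have hkey : ∀ n : ℕ, ∃ e : X, ‖e‖ = 1 ∧
      ∀ x ∈ (Finset.range (n+1)).image d, ‖x‖ + 1 - 1/(n+1) ≤ ‖x + e‖ :=
    fun n => key_lemma_s17 hno _ _ (by positivity)
  choose e he1 he2 using hkey
  refine ⟨e, fun n => le_of_eq (he1 n), fun x => ?_⟩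
  rw [Metric.tendsto_atTop]
  intro ε hε
  obtain ⟨k, hk⟩ := hd.exists_dist_lt x (by positivity : (0:ℝ) < ε/3)
  obtain ⟨N, hN⟩ := exists_nat_one_div_lt (by positivity : (0:ℝ) < ε/3)
  refine ⟨max k N, fun n hn => ?_⟩
  have hkn : k ≤ n := le_trans (le_max_left _ _) hn
  have hNn : N ≤ n := le_trans (le_max_right _ _) hn
  have hmem : d k ∈ (Finset.range (n+1)).image d :=
    Finset.mem_image.mpr ⟨k, Finset.mem_range.mpr (Nat.lt_succ_of_le hkn), rfl⟩
  have h1 := he2 n (d k) hmem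
  have hdist : ‖x - d k‖ < ε/3 := by
    rw [← dist_eq_norm]; exact hk
  have hsmall : 1/((n:ℝ)+1) < ε/3 := by
    calc 1/((n:ℝ)+1) ≤ 1/((N:ℝ)+1) := by
          apply one_div_le_one_div_of_le (by positivity)
          exact_mod_cast by omega
      _ < ε/3 := hN
  have hup : ‖x + e n‖ ≤ ‖x‖ + 1 := by
    calc ‖x + e n‖ ≤ ‖x‖ + ‖e n‖ := norm_add_le _ _
      _ = ‖x‖ + 1 := by rw [he1]
  have hlow : ‖x‖ + 1 - ε < ‖x + e n‖ := by
    have h2 : ‖d k + e n‖ ≤ ‖x + e n‖ + ‖d k - x‖ := by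
      have h3 := norm_add_le (x + e n) (d k - x)
      have h4 : x + e n + (d k - x) = d k + e n := by abel
      rw [h4] at h3; exact h3
    have h5 : ‖d k - x‖ < ε/3 := by rw [norm_sub_rev]; exact hdist
    have h6 : ‖x‖ - ε/3 < ‖d k‖ := by
      have := norm_sub_norm_le x (d k)
      have h7 : ‖x - d k‖ < ε/3 := hdist
      linarith [abs_le.mp (abs_norm_sub_norm_le x (d k))]
    have h8 : ‖d k‖ + 1 - 1/((n:ℝ)+1) ≤ ‖d k + e n‖ := by exact_mod_cast h1
    linarith
  rw [Real.dist_eq, abs_sub_lt_iff]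
  constructor <;> linarith
end

section
/- Let X be a Banach space that has the Daugavet property with respect to a norming subspace Y ⊂ X*, and let J ≠ {0} be an M-ideal in X. Then J has the Daugavet property with respect to the subspace {y*|_J : y* ∈ Y} of J*; in particular J is an almost Daugavet space. -/
set_option maxHeartbeats 1000000

open ContinuousLinearMap

section AuxLemmas

variable {X : Type*} [NormedAddCommGroup X] [NormedSpace ℝ X]




/-- In an M-ideal decomposition, restriction to `J` does not decrease norms on `V`. -/
lemma aux_normA (J : Subspace ℝ X) (V : Subspace ℝ (X →L[ℝ] ℝ))
    (hsum : ∀ f : X →L[ℝ] ℝ, ∃ v ∈ V, ∃ w : X →L[ℝ] ℝ, (∀ x ∈ J, w x = 0) ∧ f = v + w)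
    (hdisj : ∀ v ∈ V, (∀ x ∈ J, v x = 0) → v = 0)
    (hL : ∀ v ∈ V, ∀ w : X →L[ℝ] ℝ, (∀ x ∈ J, w x = 0) → ‖v + w‖ = ‖v‖ + ‖w‖)
    (v : X →L[ℝ] ℝ) (hv : v ∈ V) :
    ‖v‖ ≤ ‖v.comp J.subtypeL‖ := by
  obtain ⟨fe, hfe, hfen⟩ := exists_extension_norm_eq J (v.comp J.subtypeL)
  obtain ⟨v', hv'V, w', hw'J, hfw⟩ := hsum fe
  have hvv' : v = v' := by
    have h0 : ∀ x ∈ J, (v - v') x = 0 := by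
      intro x hx
      have h1 : fe x = v x := hfe ⟨x, hx⟩
      have h2 : fe x = v' x + w' x := by rw [hfw]; rfl
      have h3 : w' x = 0 := hw'J x hx
      simp only [ContinuousLinearMap.sub_apply]
      linarith
    have h := hdisj (v - v') (Submodule.sub_mem V hv hv'V) h0
    have := sub_eq_zero.mp h
    exact this
  calc ‖v‖ = ‖v'‖ := by rw [hvv']
    _ ≤ ‖v'‖ + ‖w'‖ := le_add_of_nonneg_right (norm_nonneg _)
    _ = ‖v' + w'‖ := (hL v' hv'V w' hw'J).symm
    _ = ‖fe‖ := by rw [← hfw]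
    _ = ‖v.comp J.subtypeL‖ := hfen

/-- Finite Goldstine-type approximation: any point of `B_X` can be approximated weakly
(by two functionals from `V`) by points of `B_J`. -/
lemma aux_gold (J : Subspace ℝ X) (V : Subspace ℝ (X →L[ℝ] ℝ))
    (hA : ∀ v ∈ V, ‖v‖ ≤ ‖(v : X →L[ℝ] ℝ).comp J.subtypeL‖)
    (v₁ v₂ : X →L[ℝ] ℝ) (hv₁ : v₁ ∈ V) (hv₂ : v₂ ∈ V)
    (z : X) (hz : ‖z‖ ≤ 1) (ε : ℝ) (hε : 0 < ε) :
    ∃ y : J, ‖y‖ ≤ 1 ∧ |v₁ y - v₁ z| ≤ ε ∧ |v₂ y - v₂ z| ≤ ε := by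
  set L : J →L[ℝ] ℝ × ℝ := (v₁.comp J.subtypeL).prod (v₂.comp J.subtypeL) with hL
  set S : Set (ℝ × ℝ) := L '' (Metric.closedBall 0 1) with hS
  have hmem : ((v₁ z, v₂ z) : ℝ × ℝ) ∈ closure S := by
    by_contra hmemc
    have hconv : Convex ℝ (closure S) := by
      refine Convex.closure ?_
      have := (convex_closedBall (0 : J) 1).linear_image (L : J →ₗ[ℝ] ℝ × ℝ)
      simpa [hS] using this
    obtain ⟨φ, u, h₁, h₂⟩ := geometric_hahn_banach_closed_point hconv isClosed_closure hmemc
    set a := φ (1, 0) with ha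
    set b := φ (0, 1) with hb
    have hφ : ∀ p : ℝ × ℝ, φ p = p.1 * a + p.2 * b := by
      intro p
      have hp : p = p.1 • ((1 : ℝ), (0 : ℝ)) + p.2 • ((0 : ℝ), (1 : ℝ)) := by
        ext <;> simp
      have hφp : φ (p.1 • ((1:ℝ), (0:ℝ)) + p.2 • ((0:ℝ), (1:ℝ))) =
          p.1 * φ (1, 0) + p.2 * φ (0, 1) := by
        rw [map_add, map_smul, map_smul, smul_eq_mul, smul_eq_mul]
      rw [← ha, ← hb] at hφp
      rw [← hφp, ← hp]
    set v : X →L[ℝ] ℝ := a • v₁ + b • v₂ with hv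
    have hvV : v ∈ V := Submodule.add_mem V (Submodule.smul_mem V a hv₁) (Submodule.smul_mem V b hv₂)
    have hball : ∀ y : J, ‖y‖ ≤ 1 → v y < u := by
      intro y hy
      have hyS : L y ∈ S := ⟨y, by simpa [Metric.mem_closedBall] using hy, rfl⟩
      have h := h₁ (L y) (subset_closure hyS)
      have hLy : φ (L y) = v y := by
        rw [hφ]
        simp [hL, hv, ContinuousLinearMap.prod_apply]
        ring
      rwa [hLy] at h
    have hu0 : 0 < u := by simpa using hball 0 (by simp)
    have habs : ∀ y : J, ‖y‖ ≤ 1 → |v y| ≤ u := by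
      intro y hy
      have h1 := hball y hy
      have h2 := hball (-y) (by simpa using hy)
      have h3 : v (↑(-y)) = -(v y) := by
        push_cast
        simp
      rw [h3] at h2
      rw [abs_le]
      constructor <;> linarith
    have hnorm : ‖v.comp J.subtypeL‖ ≤ u := by
      refine ContinuousLinearMap.opNorm_le_bound _ hu0.le ?_
      intro y
      rcases eq_or_ne y 0 with rfl | hy0
      · simp
      · have hny : (0 : ℝ) < ‖y‖ := norm_pos_iff.mpr hy0
        have hsm : ‖(‖y‖⁻¹ • y : J)‖ ≤ 1 := by
          rw [norm_smul, norm_inv, norm_norm, inv_mul_cancel₀ hny.ne']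
        have hb1 := habs (‖y‖⁻¹ • y) hsm
        have hcoe : ((‖y‖⁻¹ • y : J) : X) = ‖y‖⁻¹ • (y : X) := by push_cast; ring
        rw [hcoe, map_smul, smul_eq_mul, abs_mul, abs_of_pos (inv_pos.mpr hny)] at hb1
        have h4 := mul_le_mul_of_nonneg_left hb1 hny.le
        rw [← mul_assoc, mul_inv_cancel₀ hny.ne', one_mul] at h4
        have h5 : |v ↑y| ≤ u * ‖y‖ := by linarith
        simpa [Real.norm_eq_abs] using h5
    have hvu : v z ≤ u := by
      have h1 : |v z| ≤ ‖v‖ * ‖z‖ := by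
        simpa [Real.norm_eq_abs] using v.le_opNorm z
      have h2 : ‖v‖ ≤ u := le_trans (hA v hvV) hnorm
      have h3 : ‖v‖ * ‖z‖ ≤ u := by nlinarith [norm_nonneg v]
      nlinarith [le_abs_self (v z)]
    have hφz : φ (v₁ z, v₂ z) = v z := by rw [hφ]; simp [hv]; ring
    rw [hφz] at h₂
    linarith
  rw [Metric.mem_closure_iff] at hmem
  obtain ⟨p, hpS, hdist⟩ := hmem ε hε
  obtain ⟨y, hyball, rfl⟩ := hpS
  refine ⟨y, by simpa [Metric.mem_closedBall] using hyball, ?_, ?_⟩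
  · have h1 : dist (v₁ z) (L y).1 ≤ dist ((v₁ z, v₂ z) : ℝ × ℝ) (L y) := by
      rw [Prod.dist_eq]; exact le_max_left _ _
    have : (L y).1 = v₁ y := by simp [hL]
    rw [this] at h1
    rw [Real.dist_eq] at h1
    rw [abs_sub_comm]
    linarith
  · have h1 : dist (v₂ z) (L y).2 ≤ dist ((v₁ z, v₂ z) : ℝ × ℝ) (L y) := by
      rw [Prod.dist_eq]; exact le_max_right _ _
    have : (L y).2 = v₂ y := by simp [hL]
    rw [this] at h1
    rw [Real.dist_eq] at h1
    rw [abs_sub_comm]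
    linarith

theorem main_ineq (Y : Subspace ℝ (X →L[ℝ] ℝ))
    (hdaug : ∀ (x : X), ∀ f ∈ Y,
      ‖ContinuousLinearMap.id ℝ X + ContinuousLinearMap.smulRight f x‖ =
        1 + ‖ContinuousLinearMap.smulRight f x‖)
    (J : Subspace ℝ X) (hJ : J ≠ ⊥)
    (V : Subspace ℝ (X →L[ℝ] ℝ))
    (hsum : ∀ f : X →L[ℝ] ℝ, ∃ v ∈ V, ∃ w : X →L[ℝ] ℝ, (∀ x ∈ J, w x = 0) ∧ f = v + w)
    (hL : ∀ v ∈ V, ∀ w : X →L[ℝ] ℝ, (∀ x ∈ J, w x = 0) → ‖v + w‖ = ‖v‖ + ‖w‖)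
    (hgold : ∀ v₁ ∈ V, ∀ v₂ ∈ V, ∀ z : X, ‖z‖ ≤ 1 → ∀ ε : ℝ, 0 < ε →
      ∃ y : J, ‖y‖ ≤ 1 ∧ |v₁ y - v₁ z| ≤ ε ∧ |v₂ y - v₂ z| ≤ ε) :
    ∀ (x : J), ∀ f ∈ Y,
      ‖ContinuousLinearMap.id ℝ J +
          ContinuousLinearMap.smulRight (f.comp J.subtypeL) x‖ =
        1 + ‖ContinuousLinearMap.smulRight (f.comp J.subtypeL) x‖ := by
  intro x f hfY
  set g : J →L[ℝ] ℝ := f.comp J.subtypeL with hgdef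
  by_cases htriv : g = 0 ∨ x = 0
  · have hT : ContinuousLinearMap.smulRight g x = 0 := by
      rcases htriv with h | h <;> · ext y; simp [h]
    haveI : Nontrivial J := Submodule.nontrivial_iff_ne_bot.mpr hJ
    rw [hT, add_zero, ContinuousLinearMap.norm_id, ContinuousLinearMap.opNorm_zero, add_zero]
  push_neg at htriv
  obtain ⟨hg0, hx0⟩ := htriv
  set x' : X := (x : X) with hx'
  set n : ℝ := ‖x‖ with hn
  set s : ℝ := ‖g‖ with hs
  set F : ℝ := ‖f‖ with hF
  clear_value n s F
  have hn0 : 0 < n := by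
    rw [hn]
    rcases (norm_nonneg x).eq_or_lt with h | h
    · exact absurd (norm_eq_zero.mp h.symm) hx0
    · exact h
  have hs0 : 0 < s := by
    rw [hs]
    rcases (norm_nonneg g).eq_or_lt with h | h
    · exact absurd ((ContinuousLinearMap.opNorm_zero_iff g).mp h.symm) hg0
    · exact h
  have hxn : ‖x'‖ = n := by rw [hx', hn, Submodule.coe_norm]
  have hsF : s ≤ F := by
    rw [hs, hF]
    refine ContinuousLinearMap.opNorm_le_bound _ (norm_nonneg f) ?_
    intro y
    calc ‖g y‖ ≤ ‖f‖ * ‖(y : X)‖ := f.le_opNorm _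
      _ = ‖f‖ * ‖y‖ := by rw [Submodule.coe_norm]
  have hF0 : 0 < F := lt_of_lt_of_le hs0 hsF
  have hTn : ‖ContinuousLinearMap.smulRight g x‖ = s * n := by
    rw [hs, hn]; exact norm_smulRight_apply g x
  refine le_antisymm ?_ ?_
  · calc ‖ContinuousLinearMap.id ℝ J + ContinuousLinearMap.smulRight g x‖
        ≤ ‖ContinuousLinearMap.id ℝ J‖ + ‖ContinuousLinearMap.smulRight g x‖ :=
          ContinuousLinearMap.opNorm_add_le _ _
      _ ≤ 1 + ‖ContinuousLinearMap.smulRight g x‖ := by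
          have h1 := ContinuousLinearMap.norm_id_le (E := J) (𝕜 := ℝ)
          linarith only [h1]
  · rw [hTn]
    set δ₀ : ℝ := min (s * n / (n + 1)) (n * F) with hδ₀
    set E : ℝ → ℝ := fun δ =>
      1 - 2 * δ - δ / (F * n) + (s - δ / n - δ) * (n - δ / F) with hE
    clear_value δ₀ E
    have hδ₀pos : 0 < δ₀ := by
      rw [hδ₀]
      exact lt_min (div_pos (mul_pos hs0 hn0) (by linarith only [hn0]))
        (mul_pos hn0 hF0)
    have hEb : ∀ δ ∈ Set.Ioo (0 : ℝ) δ₀,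
        E δ ≤ ‖ContinuousLinearMap.id ℝ J + ContinuousLinearMap.smulRight g x‖ := by
      intro δ hδ
      obtain ⟨hδ0, hδlt⟩ := hδ
      have hδ1 : δ ≤ s * n / (n + 1) := le_trans (hδ₀ ▸ hδlt).le (min_le_left _ _)
      have hδ2 : δ ≤ n * F := le_trans (hδ₀ ▸ hδlt).le (min_le_right _ _)
      have hδsn : δ < s * n := by
        have h6 : s * n / (n + 1) < s * n := by
          rw [div_lt_iff₀ (by linarith only [hn0] : (0:ℝ) < n + 1)]
          nlinarith only [mul_pos (mul_pos hs0 hn0) hn0]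
        linarith only [hδ1, h6]
      have hδFn : δ < F * n := by
        have h1 : s * n ≤ F * n := mul_le_mul_of_nonneg_right hsF hn0.le
        linarith only [hδsn, h1]
      -- step 1: pick z from the Daugavet property of X
      have hDa := hdaug x' f hfY
      have hAx : ‖ContinuousLinearMap.smulRight f x'‖ = F * n := by
        rw [norm_smulRight_apply, hxn, hF]
      have hlt : 1 + F * n - δ <
          ‖ContinuousLinearMap.id ℝ X + ContinuousLinearMap.smulRight f x'‖ := by
        rw [hDa, hAx]; linarith only [hδ0]
      obtain ⟨z₀, hz₀n, hz₀⟩ := ContinuousLinearMap.exists_lt_apply_of_lt_opNorm _ hlt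
      simp only [ContinuousLinearMap.add_apply, ContinuousLinearMap.id_apply,
        ContinuousLinearMap.smulRight_apply] at hz₀
      obtain ⟨z, hzn, hzI, hfz0⟩ : ∃ z : X, ‖z‖ ≤ 1 ∧
          1 + F * n - δ ≤ ‖z + f z • x'‖ ∧ 0 ≤ f z := by
        rcases le_or_gt 0 (f z₀) with h | h
        · exact ⟨z₀, hz₀n.le, hz₀.le, h⟩
        · refine ⟨-z₀, by simpa using hz₀n.le, ?_, by simpa using h.le⟩
          have hneg : -z₀ + f (-z₀) • x' = -(z₀ + f z₀ • x') := by
            rw [map_neg]; module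
          rw [hneg, norm_neg]
          exact hz₀.le
      have hfzF : f z ≤ F := by
        have h1 := f.le_opNorm z
        rw [Real.norm_eq_abs, ← hF] at h1
        have h2 : F * ‖z‖ ≤ F * 1 := mul_le_mul_of_nonneg_left hzn hF0.le
        linarith only [h1, h2, le_abs_self (f z)]
      have hfzlb : F - δ / n ≤ f z := by
        have h1 : ‖z + f z • x'‖ ≤ ‖z‖ + ‖f z • x'‖ := norm_add_le _ _
        have h2 : ‖f z • x'‖ = f z * n := by
          rw [norm_smul, Real.norm_eq_abs, abs_of_nonneg hfz0, hxn]
        have h3 : F * n - δ ≤ f z * n := by linarith only [hzI, h1, h2, hzn]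
        have h4 : (F * n - δ) / n ≤ f z := by
          rw [div_le_iff₀ hn0]; linarith only [h3]
        have h5 : (F * n - δ) / n = F - δ / n := by
          rw [sub_div, mul_div_cancel_right₀ _ hn0.ne']
        linarith only [h4, h5]
      -- step 2: a norming functional for z + f z • x'
      have hu0 : z + f z • x' ≠ 0 := by
        intro h
        rw [h, norm_zero] at hzI
        linarith only [hzI, hδFn]
      obtain ⟨f₀, hf₀n, hf₀u⟩ := exists_dual_vector ℝ (z + f z • x') (norm_ne_zero_iff.mpr hu0)
      have hval : f₀ (z + f z • x') = ‖z + f z • x'‖ := by exact_mod_cast hf₀u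
      have hkey : 1 + F * n - δ ≤ f₀ z + f z * f₀ x' := by
        have h1 : f₀ (z + f z • x') = f₀ z + f z * f₀ x' := by
          rw [map_add, map_smul, smul_eq_mul]
        rw [h1] at hval
        linarith only [hval, hzI]
      obtain ⟨v₀, hv₀V, w₀, hw₀J, hf₀d⟩ := hsum f₀
      have hvw : ‖v₀‖ + ‖w₀‖ = 1 := by
        rw [← hL v₀ hv₀V w₀ hw₀J, ← hf₀d, hf₀n]
      have hfx : f₀ x' = v₀ x' := by
        rw [hf₀d]
        simp [ContinuousLinearMap.add_apply, hw₀J x' x.2]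
      have hkey2 : 1 + F * n - δ ≤ f₀ z + f z * v₀ x' := by rw [← hfx]; exact hkey
      have hf₀z_le : f₀ z ≤ 1 := by
        have h1 := f₀.le_opNorm z
        rw [Real.norm_eq_abs, hf₀n, one_mul] at h1
        linarith only [h1, le_abs_self (f₀ z), hzn]
      have hv₀x_le : v₀ x' ≤ ‖v₀‖ * n := by
        have h1 := v₀.le_opNorm x'
        rw [Real.norm_eq_abs, hxn] at h1
        linarith only [h1, le_abs_self (v₀ x')]
      have hv₀n1 : ‖v₀‖ ≤ 1 := by linarith only [hvw, norm_nonneg w₀]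
      have key2 : F * n - δ ≤ f z * v₀ x' := by linarith only [hkey2, hf₀z_le]
      have hv₀x_pos : 0 < v₀ x' := by
        by_contra h
        push_neg at h
        have h1 : f z * v₀ x' ≤ 0 := mul_nonpos_of_nonneg_of_nonpos hfz0 h
        linarith only [h1, key2, hδFn]
      have hv₀x_lb : n - δ / F ≤ v₀ x' := by
        have h1 : f z * v₀ x' ≤ F * v₀ x' := mul_le_mul_of_nonneg_right hfzF hv₀x_pos.le
        have h2 : (F * n - δ) / F ≤ v₀ x' := by
          rw [div_le_iff₀ hF0]; linarith only [key2, h1]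
        have h3 : (F * n - δ) / F = n - δ / F := by
          rw [sub_div, mul_div_cancel_left₀ _ hF0.ne']
        linarith only [h2, h3]
      have hw₀_le : ‖w₀‖ ≤ δ / (F * n) := by
        have h3 : f z * v₀ x' ≤ F * v₀ x' := mul_le_mul_of_nonneg_right hfzF hv₀x_pos.le
        have h4 : F * v₀ x' ≤ F * (‖v₀‖ * n) := mul_le_mul_of_nonneg_left hv₀x_le hF0.le
        have h6 : F * n * (1 - ‖v₀‖) ≤ δ := by nlinarith only [key2, h3, h4]
        have h7 : 1 - ‖v₀‖ ≤ δ / (F * n) := by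
          rw [le_div_iff₀ (mul_pos hF0 hn0)]; linarith only [h6]
        linarith only [h7, hvw]
      have hf₀z_lb : 1 - δ ≤ f₀ z := by
        have h1 : ‖v₀‖ * n ≤ 1 * n := mul_le_mul_of_nonneg_right hv₀n1 hn0.le
        have h2 : f z * v₀ x' ≤ F * (‖v₀‖ * n) :=
          le_trans (mul_le_mul_of_nonneg_right hfzF hv₀x_pos.le)
            (mul_le_mul_of_nonneg_left hv₀x_le hF0.le)
        have h3 : F * (‖v₀‖ * n) ≤ F * (1 * n) := mul_le_mul_of_nonneg_left h1 hF0.le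
        linarith only [hkey2, h2, h3]
      have hw₀z : w₀ z ≤ ‖w₀‖ := by
        have h1 := w₀.le_opNorm z
        rw [Real.norm_eq_abs] at h1
        have h2 : ‖w₀‖ * ‖z‖ ≤ ‖w₀‖ * 1 := mul_le_mul_of_nonneg_left hzn (norm_nonneg w₀)
        linarith only [h1, h2, le_abs_self (w₀ z)]
      have hv₀z_lb : 1 - δ - δ / (F * n) ≤ v₀ z := by
        have h1 : f₀ z = v₀ z + w₀ z := by rw [hf₀d]; rfl
        linarith only [hf₀z_lb, hw₀z, hw₀_le, h1]
      -- step 3: decomposition of f itself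
      obtain ⟨v, hvV, w, hwJ, hfd⟩ := hsum f
      have hFvw : F = ‖v‖ + ‖w‖ := by
        rw [hF, hfd]
        exact hL v hvV w hwJ
      have hgv : ∀ y : J, g y = v y := by
        intro y
        have h1 : f (y : X) = v (y : X) + w (y : X) := by rw [hfd]; rfl
        have h2 : w (y : X) = 0 := hwJ _ y.2
        calc g y = f (y : X) := rfl
          _ = v (y : X) := by rw [h1, h2, add_zero]
      have hsv : s ≤ ‖v‖ := by
        rw [hs]
        refine ContinuousLinearMap.opNorm_le_bound _ (norm_nonneg v) ?_
        intro y
        rw [show g y = v (y : X) from hgv y]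
        calc ‖v (y : X)‖ ≤ ‖v‖ * ‖(y : X)‖ := v.le_opNorm _
          _ = ‖v‖ * ‖y‖ := by rw [Submodule.coe_norm]
      have hwz : w z ≤ ‖w‖ := by
        have h1 := w.le_opNorm z
        rw [Real.norm_eq_abs] at h1
        have h2 : ‖w‖ * ‖z‖ ≤ ‖w‖ * 1 := mul_le_mul_of_nonneg_left hzn (norm_nonneg w)
        linarith only [h1, h2, le_abs_self (w z)]
      have hvz_lb : s - δ / n ≤ v z := by
        have h1 : f z = v z + w z := by rw [hfd]; rfl
        linarith only [hfzlb, hwz, hsv, hFvw, h1]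
      -- step 4: Goldstine approximation
      obtain ⟨y, hyn, hy1, hy2⟩ := hgold v hvV v₀ hv₀V z hzn δ hδ0
      have hgy_lb : s - δ / n - δ ≤ g y := by
        rw [hgv y]
        linarith only [(abs_le.mp hy1).1, hvz_lb]
      have hv₀y_lb : 1 - 2 * δ - δ / (F * n) ≤ v₀ (y : X) := by
        linarith only [(abs_le.mp hy2).1, hv₀z_lb]
      -- step 5: conclude
      have hc3 : 0 ≤ s - δ / n - δ := by
        have h2 : δ * (n + 1) ≤ s * n := by
          rw [← le_div_iff₀ (by linarith only [hn0] : (0:ℝ) < n + 1)]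
          exact hδ1
        have h3 : δ / n ≤ s - δ := by
          rw [div_le_iff₀ hn0]; linarith only [h2]
        linarith only [h3]
      have hc4 : 0 ≤ n - δ / F := by
        have h1 : δ / F ≤ n := by
          rw [div_le_iff₀ hF0]; linarith only [hδ2]
        linarith only [h1]
      have hcoe : (((y + g y • x : J) : X)) = (y : X) + g y • x' := by push_cast; rfl
      have happ : (ContinuousLinearMap.id ℝ J + ContinuousLinearMap.smulRight g x) y
          = y + g y • x := by
        simp [ContinuousLinearMap.add_apply, ContinuousLinearMap.smulRight_apply]
      have hnormy : ‖(ContinuousLinearMap.id ℝ J + ContinuousLinearMap.smulRight g x) y‖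
          = ‖(y : X) + g y • x'‖ := by
        rw [happ, Submodule.coe_norm, hcoe]
      have hlow : v₀ ((y : X) + g y • x') ≤ ‖(y : X) + g y • x'‖ := by
        have h1 := v₀.le_opNorm ((y : X) + g y • x')
        rw [Real.norm_eq_abs] at h1
        have h2 : ‖v₀‖ * ‖(y : X) + g y • x'‖ ≤ 1 * ‖(y : X) + g y • x'‖ :=
          mul_le_mul_of_nonneg_right hv₀n1 (norm_nonneg _)
        linarith only [h1, h2, le_abs_self (v₀ ((y : X) + g y • x'))]
      have hvaly : v₀ ((y : X) + g y • x') = v₀ (y : X) + g y * v₀ x' := by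
        rw [map_add, map_smul, smul_eq_mul]
      have hopn : ‖(ContinuousLinearMap.id ℝ J + ContinuousLinearMap.smulRight g x) y‖
          ≤ ‖ContinuousLinearMap.id ℝ J + ContinuousLinearMap.smulRight g x‖ :=
        ContinuousLinearMap.unit_le_opNorm _ y hyn
      have hprod : (s - δ / n - δ) * (n - δ / F) ≤ g y * v₀ x' :=
        mul_le_mul hgy_lb hv₀x_lb hc4 (le_trans hc3 hgy_lb)
      have hEδ : E δ = 1 - 2 * δ - δ / (F * n) + (s - δ / n - δ) * (n - δ / F) := by
        rw [hE]
      have hfinal : 1 - 2 * δ - δ / (F * n) + (s - δ / n - δ) * (n - δ / F)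
          ≤ v₀ ((y : X) + g y • x') := by
        rw [hvaly]
        linarith only [hv₀y_lb, hprod]
      rw [hEδ]
      calc 1 - 2 * δ - δ / (F * n) + (s - δ / n - δ) * (n - δ / F)
          ≤ v₀ ((y : X) + g y • x') := hfinal
        _ ≤ ‖(y : X) + g y • x'‖ := hlow
        _ = ‖(ContinuousLinearMap.id ℝ J + ContinuousLinearMap.smulRight g x) y‖ :=
            hnormy.symm
        _ ≤ ‖ContinuousLinearMap.id ℝ J + ContinuousLinearMap.smulRight g x‖ := hopn
    have hTend : Filter.Tendsto E (nhdsWithin 0 (Set.Ioi 0)) (nhds (1 + s * n)) := by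
      have hc : Continuous E := by
        rw [hE]
        fun_prop
      have h0 : E 0 = 1 + s * n := by
        rw [hE]
        norm_num
      have h1 := hc.tendsto 0
      rw [h0] at h1
      exact h1.mono_left nhdsWithin_le_nhds
    exact le_of_tendsto hTend
      (Filter.eventually_of_mem (Ioo_mem_nhdsGT_of_mem ⟨le_refl (0:ℝ), hδ₀pos⟩) hEb)

end AuxLemmas

/-- The restriction map `X* →ₗ J*`. -/
noncomputable def restrictTo {X : Type*} [NormedAddCommGroup X] [NormedSpace ℝ X]
    (J : Subspace ℝ X) : (X →L[ℝ] ℝ) →ₗ[ℝ] (J →L[ℝ] ℝ) where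
  toFun f := f.comp J.subtypeL
  map_add' a b := by ext y; simp
  map_smul' c a := by ext y; simp

theorem stmt_18 {X : Type*} [NormedAddCommGroup X] [NormedSpace ℝ X] [CompleteSpace X]
    (Y : Subspace ℝ (X →L[ℝ] ℝ)) (hnorming : IsNormingSubspace Y)
    (hdaug : HasDaugavetWrt Y)
    (J : Subspace ℝ X) (hJc : IsClosed (J : Set X)) (hJ : J ≠ ⊥)
    -- `J` is an M-ideal: `X* = V ⊕₁ J^⊥`
    (V : Subspace ℝ (X →L[ℝ] ℝ)) (hVc : IsClosed (V : Set (X →L[ℝ] ℝ)))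
    (hsum : ∀ f : X →L[ℝ] ℝ, ∃ v ∈ V, ∃ w : X →L[ℝ] ℝ, (∀ x ∈ J, w x = 0) ∧ f = v + w)
    (hdisj : ∀ v ∈ V, (∀ x ∈ J, v x = 0) → v = 0)
    (hL : ∀ v ∈ V, ∀ w : X →L[ℝ] ℝ, (∀ x ∈ J, w x = 0) → ‖v + w‖ = ‖v‖ + ‖w‖) :
    (∀ (x : J), ∀ f ∈ Y,
      ‖ContinuousLinearMap.id ℝ J +
          ContinuousLinearMap.smulRight (f.comp J.subtypeL) x‖ =
        1 + ‖ContinuousLinearMap.smulRight (f.comp J.subtypeL) x‖) ∧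
      AlmostDaugavet J := by
  have hA : ∀ v ∈ V, ‖(v : X →L[ℝ] ℝ).comp J.subtypeL‖ ≥ ‖v‖ :=
    fun v hv => aux_normA J V hsum hdisj hL v hv
  have main : ∀ (x : J), ∀ f ∈ Y,
      ‖ContinuousLinearMap.id ℝ J +
          ContinuousLinearMap.smulRight (f.comp J.subtypeL) x‖ =
        1 + ‖ContinuousLinearMap.smulRight (f.comp J.subtypeL) x‖ :=
    main_ineq Y hdaug J hJ V hsum hL
      (fun v₁ hv₁ v₂ hv₂ z hz ε hε => aux_gold J V hA v₁ v₂ hv₁ hv₂ z hz ε hε)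
  refine ⟨main, Submodule.map (restrictTo J) Y, ?_, ?_⟩
  · -- norming
    intro x
    have hx' := hnorming (x : X)
    set SX : Set ℝ := {r : ℝ | ∃ f ∈ Y, ‖f‖ ≤ 1 ∧ r = |f (x : X)|} with hSX
    set SJ : Set ℝ := {r : ℝ | ∃ g ∈ Submodule.map (restrictTo J) Y, ‖g‖ ≤ 1 ∧ r = |g x|}
      with hSJ
    have hxx : ‖x‖ = ‖(x : X)‖ := rfl
    have hsub : SX ⊆ SJ := by
      rintro r ⟨f, hfY, hf1, rfl⟩
      refine ⟨(restrictTo J) f, Submodule.mem_map_of_mem hfY, ?_, ?_⟩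
      · refine le_trans (ContinuousLinearMap.opNorm_le_bound _ (norm_nonneg f) ?_) hf1
        intro y
        calc ‖f.comp J.subtypeL y‖ ≤ ‖f‖ * ‖(y : X)‖ := f.le_opNorm _
          _ = ‖f‖ * ‖y‖ := rfl
      · rfl
    have hboundJ : ∀ r ∈ SJ, r ≤ ‖x‖ := by
      rintro r ⟨g, hgY, hg1, rfl⟩
      calc |g x| ≤ ‖g‖ * ‖x‖ := by simpa [Real.norm_eq_abs] using g.le_opNorm x
        _ ≤ 1 * ‖x‖ := by gcongr
        _ = ‖x‖ := one_mul _
    have hne : SX.Nonempty := ⟨|((0 : X →L[ℝ] ℝ)) (x : X)|, 0, Y.zero_mem, by simp, rfl⟩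
    have hbddJ : BddAbove SJ := ⟨‖x‖, hboundJ⟩
    refine le_antisymm ?_ (Real.sSup_le hboundJ (norm_nonneg x))
    calc ‖x‖ = sSup SX := by rw [hxx, hx']
      _ ≤ sSup SJ := csSup_le_csSup hbddJ hne hsub
  · -- Daugavet wrt restriction
    intro x g hg
    obtain ⟨f, hfY, rfl⟩ := Submodule.mem_map.mp hg
    exact main x f hfY
end

section
/- Let X be a Banach space and (e_n) a sequence in the closed unit ball of X such that lim_{n→∞} ‖x + e_n‖ = ‖x‖ + 1 for every x ∈ X. Then for every x ∈ X and every y* ∈ X* with ‖y*‖ = 1, the rank-one operator T = y* ⊗ x (T(z) = y*(z)x) satisfies ‖Id + T‖ = 1 + ‖T‖ provided lim sup_{n→∞} y*(e_n) = 1. -/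
theorem stmt_19 {X : Type*} [NormedAddCommGroup X] [NormedSpace ℝ X] [CompleteSpace X]
    (e : ℕ → X) (he : ∀ n, ‖e n‖ ≤ 1)
    (hlim : ∀ x : X, Filter.Tendsto (fun n => ‖x + e n‖) Filter.atTop (nhds (‖x‖ + 1)))
    (x : X) (y : X →L[ℝ] ℝ) (hy : ‖y‖ = 1)
    (hsup : Filter.limsup (fun n => y (e n)) Filter.atTop = 1) :
    ‖ContinuousLinearMap.id ℝ X + ContinuousLinearMap.smulRight y x‖ =
      1 + ‖ContinuousLinearMap.smulRight y x‖ := by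
  set T := ContinuousLinearMap.smulRight y x with hT
  have hTnorm : ‖T‖ = ‖x‖ := by
    rw [hT, ContinuousLinearMap.norm_smulRight_apply, hy, one_mul]
  have hye : ∀ n, y (e n) ≤ 1 := by
    intro n
    calc y (e n) ≤ |y (e n)| := le_abs_self _
    _ ≤ ‖y‖ * ‖e n‖ := y.le_opNorm _
    _ ≤ 1 * 1 := by apply mul_le_mul (le_of_eq hy) (he n) (norm_nonneg _) zero_le_one
    _ = 1 := one_mul 1
  apply le_antisymm
  · calc ‖ContinuousLinearMap.id ℝ X + T‖ ≤ ‖ContinuousLinearMap.id ℝ X‖ + ‖T‖ :=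
        norm_add_le _ _
    _ ≤ 1 + ‖T‖ := add_le_add_left ContinuousLinearMap.norm_id_le _
  · rw [hTnorm]
    have key : ∀ ε : ℝ, 0 < ε → 1 + ‖x‖ ≤ ‖ContinuousLinearMap.id ℝ X + T‖ + ε := by
      intro ε hε
      set δ := ε / (2 * (1 + ‖x‖)) with hδ
      have h1x : (0:ℝ) < 1 + ‖x‖ := by positivity
      have hδpos : 0 < δ := by positivity
      -- frequently y (e n) > 1 - δ
      have hcobdd : Filter.IsCoboundedUnder (· ≤ ·) Filter.atTop (fun n => y (e n)) := by
        apply Filter.IsCoboundedUnder.of_frequently_ge (a := -1)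
        apply Filter.Frequently.of_forall
        intro n
        have : |y (e n)| ≤ 1 := by
          calc |y (e n)| ≤ ‖y‖ * ‖e n‖ := y.le_opNorm _
          _ ≤ 1 * 1 := by
              apply mul_le_mul (le_of_eq hy) (he n) (norm_nonneg _) zero_le_one
          _ = 1 := one_mul 1
        linarith [neg_abs_le (y (e n))]
      have hfreq : ∃ᶠ n in Filter.atTop, 1 - δ < y (e n) := by
        apply Filter.frequently_lt_of_lt_limsup hcobdd
        rw [hsup]; linarith
      have hev : ∀ᶠ n in Filter.atTop, ‖x‖ + 1 - δ < ‖x + e n‖ := by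
        have := (hlim x).eventually_const_lt (show ‖x‖ + 1 - δ < ‖x‖ + 1 by linarith)
        exact this
      obtain ⟨n, hn1, hn2⟩ := (hfreq.and_eventually hev).exists
      -- ‖(Id + T) (e n)‖ ≤ ‖Id + T‖
      have hle : ‖e n + y (e n) • x‖ ≤ ‖ContinuousLinearMap.id ℝ X + T‖ := by
        have h := (ContinuousLinearMap.id ℝ X + T).le_opNorm (e n)
        simp only [ContinuousLinearMap.add_apply, ContinuousLinearMap.id_apply, hT,
          ContinuousLinearMap.smulRight_apply] at h
        calc ‖e n + y (e n) • x‖ ≤ ‖ContinuousLinearMap.id ℝ X + T‖ * ‖e n‖ := h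
        _ ≤ ‖ContinuousLinearMap.id ℝ X + T‖ * 1 :=
            mul_le_mul_of_nonneg_left (he n) (norm_nonneg _)
        _ = _ := mul_one _
      have hlow : ‖x + e n‖ - (1 - y (e n)) * ‖x‖ ≤ ‖e n + y (e n) • x‖ := by
        have : x + e n = (e n + y (e n) • x) + (1 - y (e n)) • x := by
          rw [sub_smul, one_smul]; abel
        calc ‖x + e n‖ - (1 - y (e n)) * ‖x‖
            = ‖(e n + y (e n) • x) + (1 - y (e n)) • x‖ - (1 - y (e n)) * ‖x‖ := by rw [← this]
        _ ≤ (‖e n + y (e n) • x‖ + ‖(1 - y (e n)) • x‖) - (1 - y (e n)) * ‖x‖ := by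
            linarith [norm_add_le (e n + y (e n) • x) ((1 - y (e n)) • x)]
        _ ≤ ‖e n + y (e n) • x‖ := by
            rw [norm_smul, Real.norm_eq_abs, abs_of_nonneg (by linarith [hye n])]
            linarith
      have h1 : (1 - y (e n)) * ‖x‖ ≤ δ * ‖x‖ := by
        apply mul_le_mul_of_nonneg_right _ (norm_nonneg x)
        linarith
      have hδε : δ + δ * ‖x‖ ≤ ε := by
        have : δ * (1 + ‖x‖) = ε / 2 := by
          rw [hδ]; field_simp
        nlinarith
      linarith
    -- conclude
    have := le_of_forall_pos_le_add key
    linarith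
end
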